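/- arXiv:2508.00666 — 4 statements merged into one kernel-verified Lean document; each statement's English description precedes it below -/
import Mathlib

section
/- Let Ω be a simply connected domain contained in the upper half-plane {Im w > 0}, convex in the positive direction and not contained in any horizontal strip, and let h be a Koenigs map onto Ω. If θ_Ω = Θ_Ω = π, then for every λ ∈ ℂ with λ ≠ 0 one has D(e^{λh}) = ∞; that is, the point spectrum on the Dirichlet space equals {0}. (Theorem 1.3(c).) -/
open MeasureTheory Set Complex Metric
open scoped ENNReal NNReal

noncomputable section

/-- The Dirichlet integral `D(f) = ∫_𝔻 |f'(z)|² dA(z)` over the unit disk. -/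
def dirichletIntegral (f : ℂ → ℂ) : ℝ≥0∞ :=
  ∫⁻ z in ball (0 : ℂ) 1, (‖deriv f z‖₊ : ℝ≥0∞) ^ 2

/-- `h` is a Koenigs map onto `Ω`: an injective holomorphic map on the unit disk with image `Ω`. -/
def IsKoenigsMap (h : ℂ → ℂ) (Ω : Set ℂ) : Prop :=
  DifferentiableOn ℂ h (ball 0 1) ∧ InjOn h (ball 0 1) ∧ h '' ball 0 1 = Ω

/-- `Ω` is convex in the positive direction: `Ω + t ⊆ Ω` for all `t ≥ 0`. -/
def ConvexPosDir (Ω : Set ℂ) : Prop :=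
  ∀ t : ℝ, 0 ≤ t → ∀ w ∈ Ω, w + (t : ℂ) ∈ Ω

/-- The open angular sector `S(α,β) = {w ≠ 0 : α < arg w < β}` (principal argument). -/
def sector (a b : ℝ) : Set ℂ :=
  {w : ℂ | w ≠ 0 ∧ a < Complex.arg w ∧ Complex.arg w < b}

/-- The inner argument `θ_Ω` of a domain contained in the upper half-plane. -/
def innerArg (Ω : Set ℂ) : ℝ :=
  sSup ({0} ∪ {θ : ℝ | θ ∈ Ioc 0 Real.pi ∧ ∃ q : ℂ, (fun w => q + w) '' sector 0 θ ⊆ Ω})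

/-- The outer argument `Θ_Ω` of a domain contained in the upper half-plane. -/
def outerArg (Ω : Set ℂ) : ℝ :=
  sInf {θ : ℝ | θ ∈ Ioc 0 Real.pi ∧ ∃ q : ℂ, Ω ⊆ (fun w => q + w) '' sector 0 θ}

/-! ### Auxiliary lemmas -/

lemma det_aux (c : ℂ) : (((1 : ℂ →L[ℂ] ℂ).smulRight c).restrictScalars ℝ).det = Complex.normSq c := by
  have h1 : ((((1 : ℂ →L[ℂ] ℂ).smulRight c).restrictScalars ℝ) : ℂ →ₗ[ℝ] ℂ)
      = Algebra.lmul ℝ ℂ c := by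
    ext z; simp [mul_comm]
  rw [ContinuousLinearMap.det, h1, ← Algebra.norm_apply, Algebra.norm_complex_apply]

lemma ofReal_normSq_eq (c : ℂ) :
    ENNReal.ofReal (Complex.normSq c) = (‖c‖₊ : ℝ≥0∞) ^ 2 := by
  rw [Complex.normSq_eq_norm_sq,
    ENNReal.ofReal_pow (norm_nonneg c), ofReal_norm, enorm_eq_nnnorm]

lemma lintegral_image_univalent {s : Set ℂ} (hs : IsOpen s) (f : ℂ → ℂ)
    (hf : DifferentiableOn ℂ f s) (hinj : InjOn f s) (g : ℂ → ℝ≥0∞) :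
    ∫⁻ w in f '' s, g w = ∫⁻ z in s, (‖deriv f z‖₊ : ℝ≥0∞) ^ 2 * g (f z) := by
  rw [MeasureTheory.lintegral_image_eq_lintegral_abs_det_fderiv_mul volume hs.measurableSet
    (f' := fun z => ((1 : ℂ →L[ℂ] ℂ).smulRight (deriv f z)).restrictScalars ℝ)
    (fun x hx => (((hf.differentiableAt (hs.mem_nhds hx)).hasDerivAt).hasFDerivAt.restrictScalars
      ℝ).hasFDerivWithinAt) hinj g]
  refine setLIntegral_congr_fun hs.measurableSet (fun z hz => ?_)
  rw [det_aux, _root_.abs_of_nonneg (Complex.normSq_nonneg _), ofReal_normSq_eq]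

lemma volume_reProdIm (s t : Set ℝ) (hs : MeasurableSet s) (ht : MeasurableSet t) :
    volume (s ×ℂ t) = volume s * volume t := by
  have h : s ×ℂ t = Complex.measurableEquivRealProd ⁻¹' (s ×ˢ t) := rfl
  rw [h, Complex.volume_preserving_equiv_real_prod.measure_preimage
    ((hs.prod ht).nullMeasurableSet)]
  simp [Measure.volume_eq_prod, hs.prod ht]

lemma nnnorm_cexp_sq (w : ℂ) :
    ((‖Complex.exp w‖₊ : ℝ≥0∞)) ^ 2 = ENNReal.ofReal (Real.exp (2 * w.re)) := by
  rw [← enorm_eq_nnnorm, ← ofReal_norm, Complex.norm_exp,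
    ← ENNReal.ofReal_pow (Real.exp_nonneg _)]
  congr 1
  rw [two_mul, Real.exp_add, sq]

open Real in
lemma caseA (Ω : Set ℂ) (hopen : IsOpen Ω) (hne : Ω.Nonempty) (hconv : ConvexPosDir Ω)
    (lam : ℂ) (hre : 0 ≤ lam.re) :
    ∃ (q c : ℂ) (B : Set ℂ) (m : ℝ), IsOpen B ∧ volume B = ⊤ ∧ ‖c‖ = 1 ∧
      ((fun w => q + c * w) '' B ⊆ Ω) ∧ ∀ z ∈ B, m ≤ (lam * (q + c * z)).re := by
  obtain ⟨w0, hw0⟩ := hne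
  obtain ⟨ε, εpos, hball⟩ := Metric.isOpen_iff.1 hopen w0 hw0
  refine ⟨0, 1, Ioi w0.re ×ℂ Ioo (w0.im - ε/2) (w0.im + ε/2),
    lam.re * w0.re - |lam.im| * (|w0.im| + ε), isOpen_Ioi.reProdIm isOpen_Ioo, ?_, norm_one,
    ?_, ?_⟩
  · rw [volume_reProdIm _ _ measurableSet_Ioi measurableSet_Ioo, Real.volume_Ioi,
      Real.volume_Ioo]
    rw [ENNReal.top_mul]
    simp only [ne_eq, ENNReal.ofReal_eq_zero, not_le]
    linarith
  · rintro w ⟨z, hz, rfl⟩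
    simp only [zero_add, one_mul]
    rw [Complex.mem_reProdIm] at hz
    obtain ⟨hz1, hz2⟩ := hz
    set w' : ℂ := w0 + (z.im - w0.im) * Complex.I with hw'
    have hw'mem : w' ∈ Metric.ball w0 ε := by
      rw [Metric.mem_ball, dist_eq_norm]
      have : w' - w0 = (↑(z.im - w0.im)) * Complex.I := by rw [hw']; push_cast; ring
      rw [this, norm_mul, Complex.norm_I, Complex.norm_real, mul_one, Real.norm_eq_abs]
      rw [mem_Ioo] at hz2
      rw [abs_lt]; constructor <;> linarith
    have hzeq : z = w' + ((z.re - w0.re : ℝ) : ℂ) := by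
      apply Complex.ext <;> simp [hw']
    rw [hzeq]
    exact hconv _ (by rw [mem_Ioi] at hz1; linarith) w' (hball hw'mem)
  · intro z hz
    rw [Complex.mem_reProdIm, mem_Ioi, mem_Ioo] at hz
    simp only [zero_add, one_mul]
    rw [Complex.mul_re]
    have h1 : lam.re * w0.re ≤ lam.re * z.re := by nlinarith [hz.1]
    have habs : |z.im| ≤ |w0.im| + ε := by
      rw [abs_le]
      constructor
      · have := neg_abs_le w0.im; linarith [hz.2.1]
      · have := le_abs_self w0.im; linarith [hz.2.2]
    have h2 : lam.im * z.im ≤ |lam.im| * (|w0.im| + ε) := by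
      calc lam.im * z.im ≤ |lam.im * z.im| := le_abs_self _
        _ = |lam.im| * |z.im| := abs_mul _ _
        _ ≤ |lam.im| * (|w0.im| + ε) := by
            exact mul_le_mul_of_nonneg_left habs (abs_nonneg _)
    linarith

open Real in
lemma caseB (Ω : Set ℂ) (hinner : innerArg Ω = Real.pi)
    (lam : ℂ) (hre : lam.re < 0) :
    ∃ (q c : ℂ) (B : Set ℂ) (m : ℝ), IsOpen B ∧ volume B = ⊤ ∧ ‖c‖ = 1 ∧
      ((fun w => q + c * w) '' B ⊆ Ω) ∧ ∀ z ∈ B, m ≤ (lam * (q + c * z)).re := by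
  have pipos := Real.pi_pos
  have pile4 := Real.pi_le_four
  set r : ℝ := -lam.re with hr
  have rpos : 0 < r := by simp [hr]; linarith
  set d : ℝ := min (π/4) (r / (2*(r + |lam.im|))) with hd
  have dpos : 0 < d := lt_min (by linarith) (div_pos rpos (by positivity))
  have dle : d ≤ π/4 := min_le_left _ _
  have dle2 : d ≤ r / (2*(r + |lam.im|)) := min_le_right _ _
  set ψ : ℝ := π - d with hψ
  have hψ1 : 0 < ψ := by rw [hψ]; linarith
  have hψ2 : ψ < π := by rw [hψ]; linarith
  -- the sector angle θ
  have hS : sSup ({0} ∪ {θ : ℝ | θ ∈ Ioc 0 Real.pi ∧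
      ∃ q : ℂ, (fun w => q + w) '' sector 0 θ ⊆ Ω}) = π := hinner
  obtain ⟨θ, hθU, hθgt⟩ : ∃ θ ∈ ({0} ∪ {θ : ℝ | θ ∈ Ioc 0 Real.pi ∧
      ∃ q : ℂ, (fun w => q + w) '' sector 0 θ ⊆ Ω}), π - d/2 < θ := by
    apply exists_lt_of_lt_csSup ⟨0, by simp⟩
    rw [hS]; linarith
  have hθpos : π - d/2 < θ := hθgt
  rcases hθU with h0 | ⟨⟨θpos, θle⟩, q, hq⟩
  · exfalso; rw [mem_singleton_iff] at h0; rw [h0] at hθgt; linarith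
  set c : ℂ := Complex.exp (↑ψ * Complex.I) with hc
  have hcnorm : ‖c‖ = 1 := by rw [hc, Complex.norm_exp_ofReal_mul_I]
  have hcos_eq : c = (Real.cos ψ : ℂ) + (Real.sin ψ : ℂ) * Complex.I := by
    rw [hc, Complex.exp_mul_I, Complex.ofReal_cos, Complex.ofReal_sin]
  set μ : ℂ := lam * c with hμ
  have hμre : μ.re = r * Real.cos d - lam.im * Real.sin d := by
    rw [hμ, hcos_eq, Complex.mul_re]
    simp only [Complex.add_re, Complex.ofReal_re, Complex.mul_re, Complex.I_re,
      Complex.ofReal_im, Complex.I_im, Complex.add_im, Complex.mul_im]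
    rw [hψ, Real.cos_pi_sub, Real.sin_pi_sub, hr]
    ring
  have hcos : 1 - d ≤ Real.cos d := by
    have h := Real.one_sub_sq_div_two_le_cos (x := d)
    nlinarith
  have hsin0 : 0 ≤ Real.sin d := Real.sin_nonneg_of_nonneg_of_le_pi dpos.le (by linarith)
  have hsin1 : Real.sin d ≤ d := Real.sin_le dpos.le
  have hμrepos : r/2 ≤ μ.re := by
    rw [hμre]
    have h1 : lam.im * Real.sin d ≤ |lam.im| * d := by
      calc lam.im * Real.sin d ≤ |lam.im * Real.sin d| := le_abs_self _
        _ = |lam.im| * Real.sin d := by rw [abs_mul, _root_.abs_of_nonneg hsin0]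
        _ ≤ |lam.im| * d := mul_le_mul_of_nonneg_left hsin1 (abs_nonneg _)
    have h2 : d * (r + |lam.im|) ≤ r/2 := by
      rw [le_div_iff₀ (by positivity)] at dle2
      nlinarith
    nlinarith [abs_nonneg lam.im]
  have hμne : 0 < μ.re := by linarith
  set ε : ℝ := Real.sin (d/4) with hε
  have εpos : 0 < ε := Real.sin_pos_of_pos_of_lt_pi (by linarith) (by linarith)
  set T : ℝ := max 1 ((|(lam*q).re| + |μ.im| * ε) / μ.re + 1) with hT
  have hT1 : 1 ≤ T := le_max_left _ _
  refine ⟨q, c, Ioi T ×ℂ Ioo (-ε) ε, 0, isOpen_Ioi.reProdIm isOpen_Ioo, ?_, hcnorm, ?_, ?_⟩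
  · rw [volume_reProdIm _ _ measurableSet_Ioi measurableSet_Ioo, Real.volume_Ioi,
      Real.volume_Ioo, ENNReal.top_mul]
    simp only [ne_eq, ENNReal.ofReal_eq_zero, not_le]
    linarith
  · rintro w ⟨z, hz, rfl⟩
    rw [Complex.mem_reProdIm, mem_Ioi, mem_Ioo] at hz
    have hx1 : 1 ≤ z.re := le_trans hT1 hz.1.le
    have hzne : z ≠ 0 := by
      intro h0; rw [h0] at hx1; norm_num at hx1
    have habs1 : 1 ≤ ‖z‖ := le_trans hx1 (Complex.re_le_norm z)
    have habs0 : (0:ℝ) < ‖z‖ := by linarith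
    have harg : Complex.arg z = Real.arcsin (z.im / ‖z‖) :=
      Complex.arg_of_re_nonneg (by linarith)
    have hargle : |Complex.arg z| ≤ d/4 := by
      have himle : |z.im| ≤ ε := abs_le.2 ⟨hz.2.1.le, hz.2.2.le⟩
      have ht1 : |z.im / ‖z‖| ≤ ε := by
        rw [abs_div, _root_.abs_of_nonneg habs0.le]
        calc |z.im| / ‖z‖ ≤ |z.im| := div_le_self (abs_nonneg _) habs1
          _ ≤ ε := himle
      rw [harg]
      have habsarc : |Real.arcsin (z.im / ‖z‖)|
          = Real.arcsin |z.im / ‖z‖| := by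
        rcases le_or_gt 0 (z.im / ‖z‖) with hle | hlt
        · rw [_root_.abs_of_nonneg hle, _root_.abs_of_nonneg (Real.arcsin_nonneg.2 hle)]
        · have : Real.arcsin (z.im / ‖z‖) < 0 := by
            rw [← not_le, Real.arcsin_nonneg, not_le]; exact hlt
          rw [abs_of_neg hlt, abs_of_neg this, ← Real.arcsin_neg]
      rw [habsarc]
      calc Real.arcsin |z.im / ‖z‖| ≤ Real.arcsin ε := Real.monotone_arcsin ht1
        _ = d/4 := by rw [hε]; exact Real.arcsin_sin (by linarith) (by linarith)
    have hψargIoc : ψ + z.arg ∈ Set.Ioc (-π) π := by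
      have h1 := neg_abs_le z.arg
      have h2 := le_abs_self z.arg
      constructor
      · rw [hψ]; linarith
      · rw [hψ]; linarith
    have hczeq : c * z = (‖z‖ : ℂ) *
        (Complex.cos (↑(ψ + z.arg)) + Complex.sin (↑(ψ + z.arg)) * Complex.I) := by
      conv_lhs => rw [← Complex.norm_mul_exp_arg_mul_I z]
      rw [hc, ← Complex.exp_mul_I, Complex.ofReal_add, add_mul, Complex.exp_add]
      ring
    have hargcz : (c * z).arg = ψ + z.arg := by
      rw [hczeq]
      exact Complex.arg_mul_cos_add_sin_mul_I habs0 hψargIoc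
    apply hq
    refine ⟨c * z, ⟨mul_ne_zero (Complex.exp_ne_zero _) hzne, ?_, ?_⟩, rfl⟩
    · rw [hargcz, hψ]; have := neg_abs_le z.arg; linarith
    · rw [hargcz, hψ]; have := le_abs_self z.arg; linarith
  · intro z hz
    rw [Complex.mem_reProdIm, mem_Ioi, mem_Ioo] at hz
    have hstep : (lam * (c * z)).re = μ.re * z.re - μ.im * z.im := by
      rw [← mul_assoc, ← hμ, Complex.mul_re]
    have expand : (lam * (q + c * z)).re = (lam*q).re + (μ.re * z.re - μ.im * z.im) := by
      rw [mul_add, Complex.add_re, hstep]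
    rw [expand]
    have hz1 : T ≤ z.re := hz.1.le
    have hTq : (|(lam*q).re| + |μ.im| * ε) / μ.re + 1 ≤ T := le_max_right _ _
    have h3 : |(lam*q).re| + |μ.im| * ε + μ.re ≤ μ.re * T := by
      have h := mul_le_mul_of_nonneg_left hTq hμne.le
      rw [mul_add, mul_one, mul_div_cancel₀ _ (ne_of_gt hμne)] at h
      linarith
    have h4 : μ.re * T ≤ μ.re * z.re := mul_le_mul_of_nonneg_left hz1 hμne.le
    have h5 : μ.im * z.im ≤ |μ.im| * ε := by
      calc μ.im * z.im ≤ |μ.im * z.im| := le_abs_self _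
        _ = |μ.im| * |z.im| := abs_mul _ _
        _ ≤ |μ.im| * ε := mul_le_mul_of_nonneg_left
            (abs_le.2 ⟨hz.2.1.le, hz.2.2.le⟩) (abs_nonneg _)
    have h6 := neg_abs_le (lam*q).re
    linarith

/-- **Theorem 1.3(c).** For a parabolic semigroup of positive hyperbolic step with Koenigs domain
`Ω` in the upper half-plane, if `θ_Ω = Θ_Ω = π` then the point spectrum on the Dirichlet space is
`{0}`: `D(e^{λh}) = ∞` for every nonzero `λ`. -/
theorem dirichlet_spectrum_phs_args_pi
    (Ω : Set ℂ) (hopen : IsOpen Ω) (hsc : SimplyConnectedSpace ↥Ω)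
    (hupper : Ω ⊆ {w : ℂ | 0 < w.im})
    (hconv : ConvexPosDir Ω)
    (hnostrip : ∀ a b : ℝ, ¬ Ω ⊆ {w : ℂ | a < w.im ∧ w.im < b})
    (h : ℂ → ℂ) (hKoenigs : IsKoenigsMap h Ω)
    (hinner : innerArg Ω = Real.pi) (houter : outerArg Ω = Real.pi)
    (lam : ℂ) (hlam : lam ≠ 0) :
    dirichletIntegral (fun z => Complex.exp (lam * h z)) = ⊤ := by
  obtain ⟨hdiff, hinj, himg⟩ := hKoenigs
  set G : ℂ → ℝ≥0∞ :=
    fun w => (‖lam‖₊ : ℝ≥0∞) ^ 2 * ENNReal.ofReal (Real.exp (2 * (lam * w).re)) with hG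
  have step1 : dirichletIntegral (fun z => Complex.exp (lam * h z))
      = ∫⁻ z in ball (0:ℂ) 1, (‖deriv h z‖₊ : ℝ≥0∞) ^ 2 * G (h z) := by
    rw [dirichletIntegral]
    refine setLIntegral_congr_fun measurableSet_ball (fun z hz => ?_)
    have hhz : HasDerivAt h (deriv h z) z :=
      (hdiff.differentiableAt (isOpen_ball.mem_nhds hz)).hasDerivAt
    have hder : HasDerivAt (fun z => Complex.exp (lam * h z))
        (Complex.exp (lam * h z) * (lam * deriv h z)) z := (hhz.const_mul lam).cexp
    rw [hder.deriv, hG]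
    simp only [nnnorm_mul, ENNReal.coe_mul, mul_pow, nnnorm_cexp_sq]
    ring
  have step2 : (∫⁻ z in ball (0:ℂ) 1, (‖deriv h z‖₊ : ℝ≥0∞) ^ 2 * G (h z))
      = ∫⁻ w in Ω, G w := by
    rw [← himg, lintegral_image_univalent isOpen_ball h hdiff hinj G]
  have hne : Ω.Nonempty := ⟨h 0, himg ▸ mem_image_of_mem h (mem_ball_self one_pos)⟩
  obtain ⟨q, c, B, m, hBopen, hBvol, hcnorm, hsub, hbound⟩ :
      ∃ (q c : ℂ) (B : Set ℂ) (m : ℝ), IsOpen B ∧ volume B = ⊤ ∧ ‖c‖ = 1 ∧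
        ((fun w => q + c * w) '' B ⊆ Ω) ∧ ∀ z ∈ B, m ≤ (lam * (q + c * z)).re := by
    rcases le_or_gt 0 lam.re with hre | hre
    · exact caseA Ω hopen hne hconv lam hre
    · exact caseB Ω hinner lam hre
  have hcne : c ≠ 0 := by
    intro h0; rw [h0, norm_zero] at hcnorm; norm_num at hcnorm
  set f : ℂ → ℂ := fun w => q + c * w with hf
  have hfdiff : DifferentiableOn ℂ f B :=
    ((differentiable_const q).add ((differentiable_id).const_mul c)).differentiableOn
  have hfinj : InjOn f B := by
    intro a _ b _ hab
    have h1 : c * a = c * b := by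
      have := hab; simpa [hf] using this
    exact mul_left_cancel₀ hcne h1
  have hderiv_f : ∀ z, deriv f z = c := by
    intro z
    have : HasDerivAt f c z := by
      have h' := ((hasDerivAt_id z).const_mul c).const_add q
      simp only [id_eq, mul_one] at h'
      exact h'
    exact this.deriv
  have hc1 : (‖c‖₊ : ℝ≥0∞) = 1 := by
    rw [← enorm_eq_nnnorm, ← ofReal_norm, hcnorm, ENNReal.ofReal_one]
  have hGmeas : Measurable (fun z => G (f z)) := by
    apply Measurable.const_mul
    exact ENNReal.measurable_ofReal.comp <| (Real.continuous_exp.comp <|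
      continuous_const.mul ((Complex.continuous_re.comp
        (continuous_const.mul (continuous_const.add
          (continuous_const.mul continuous_id)))))).measurable
  have hlow : (‖lam‖₊ : ℝ≥0∞) ^ 2 * ENNReal.ofReal (Real.exp (2*m)) * volume B
      ≤ ∫⁻ w in Ω, G w := by
    calc (‖lam‖₊ : ℝ≥0∞) ^ 2 * ENNReal.ofReal (Real.exp (2*m)) * volume B
        = ∫⁻ _ in B, (‖lam‖₊ : ℝ≥0∞) ^ 2 * ENNReal.ofReal (Real.exp (2*m)) :=
          (setLIntegral_const _ _).symm
      _ ≤ ∫⁻ z in B, G (f z) := by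
          refine setLIntegral_mono hGmeas fun z hz => ?_
          refine mul_le_mul_right (ENNReal.ofReal_le_ofReal (Real.exp_le_exp.2 ?_)) _
          have := hbound z hz
          simp only [hf]
          linarith
      _ = ∫⁻ z in B, (‖deriv f z‖₊ : ℝ≥0∞) ^ 2 * G (f z) := by
          refine (setLIntegral_congr_fun hBopen.measurableSet
            (fun z hz => ?_)).symm
          rw [hderiv_f z, hc1, one_pow, one_mul]
      _ = ∫⁻ w in f '' B, G w := (lintegral_image_univalent hBopen f hfdiff hfinj G).symm
      _ ≤ ∫⁻ w in Ω, G w := lintegral_mono_set hsub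
  rw [hBvol] at hlow
  have hconst : (‖lam‖₊ : ℝ≥0∞) ^ 2 * ENNReal.ofReal (Real.exp (2*m)) ≠ 0 := by
    apply mul_ne_zero
    · exact pow_ne_zero _ (ENNReal.coe_ne_zero.2 (nnnorm_ne_zero_iff.2 hlam))
    · exact (ENNReal.ofReal_pos.2 (Real.exp_pos _)).ne'
  rw [ENNReal.mul_top hconst] at hlow
  rw [step1, step2]
  exact top_le_iff.1 hlow
end
end

section
/- Let -π ≤ a ≤ 0 ≤ b ≤ π with 0 < b - a < π, let h be a Koenigs map onto the angular sector S(a,b), and fix p ≥ 1. Then for every λ ∈ ℂ one has e^{λh} ∈ H^p if and only if λ = 0 or λ = ρ e^{iφ} for some ρ > 0 and φ ∈ [π/2 - a, 3π/2 - b]; that is, σ_p = i·closure(S(-a, π-b)). (Lemma 5.6(a), the Hardy-space sector computation.) -/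
open MeasureTheory Set Complex Metric Filter intervalIntegral
open scoped ENNReal NNReal Topology

set_option maxHeartbeats 1000000

noncomputable section

/-- Membership in the Hardy space `H^p`:
`sup_{0 ≤ r < 1} ∫_0^{2π} |f(r e^{iθ})|^p dθ < ∞`. -/
def MemHardy (p : ℝ) (f : ℂ → ℂ) : Prop :=
  (⨆ r ∈ Ico (0 : ℝ) 1,
    ∫⁻ θ in Ioc (0 : ℝ) (2 * Real.pi),
      (‖f ((r : ℂ) * Complex.exp ((θ : ℂ) * Complex.I))‖₊ : ℝ≥0∞) ^ p) < ⊤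


noncomputable def Complex.abs : AbsoluteValue ℂ ℝ where
  toFun z := ‖z‖
  map_mul' := norm_mul
  nonneg' := norm_nonneg
  eq_zero' _ := norm_eq_zero
  add_le' := norm_add_le

namespace Complex

theorem norm_eq_abs (z : ℂ) : ‖z‖ = Complex.abs z := rfl

@[simp]
theorem abs_exp (z : ℂ) : Complex.abs (exp z) = Real.exp z.re := Complex.norm_exp z

@[simp]
theorem abs_ofReal (r : ℝ) : Complex.abs (r : ℂ) = |r| := by
  change ‖(r : ℂ)‖ = _
  simp

theorem abs_mul_exp_arg_mul_I (x : ℂ) :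
    ((Complex.abs x : ℝ) : ℂ) * exp (arg x * I) = x := norm_mul_exp_arg_mul_I x

@[simp]
theorem abs_conj (z : ℂ) : Complex.abs (starRingEnd ℂ z) = Complex.abs z := by
  change ‖starRingEnd ℂ z‖ = ‖z‖
  simp

@[simp]
theorem abs_I : Complex.abs I = 1 := by
  change ‖I‖ = 1
  simp

theorem sq_abs (z : ℂ) : Complex.abs z ^ 2 = normSq z := Complex.sq_norm z

@[simp]
theorem abs_exp_ofReal_mul_I (x : ℝ) : Complex.abs (exp (x * I)) = 1 :=
  norm_exp_ofReal_mul_I x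

theorem abs_of_nonneg {r : ℝ} (h : 0 ≤ r) : Complex.abs (r : ℂ) = r := by
  rw [abs_ofReal, _root_.abs_of_nonneg h]

theorem abs_le_abs_of_mapsTo_ball_self {f : ℂ → ℂ} (hd : DifferentiableOn ℂ f (ball 0 1))
    (hm : MapsTo f (ball 0 1) (ball 0 1)) (h0 : f 0 = 0) {z : ℂ} (hz : Complex.abs z < 1) :
    Complex.abs (f z) ≤ Complex.abs z :=
  norm_le_norm_of_mapsTo_ball hd (hm.mono_right ball_subset_closedBall) h0 hz

end Complex

theorem abs_circleMap_zero (R θ : ℝ) : Complex.abs (circleMap 0 R θ) = |R| :=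
  norm_circleMap_zero R θ


lemma polar_arg {x γ : ℝ} (hx : 0 < x) (h1 : -Real.pi < γ) (h2 : γ ≤ Real.pi) :
    Complex.arg ((x : ℂ) * Complex.exp ((γ : ℂ) * Complex.I)) = γ := by
  rw [Complex.exp_mul_I]
  have h := Complex.arg_mul_cos_add_sin_mul_I hx (θ := γ) ⟨h1, h2⟩
  simpa using h

lemma polar_abs (x : ℝ) (hx : 0 ≤ x) (γ : ℝ) :
    Complex.abs ((x : ℂ) * Complex.exp ((γ : ℂ) * Complex.I)) = x := by
  rw [map_mul, Complex.abs_exp]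
  simp [Complex.abs_ofReal, _root_.abs_of_nonneg hx]

lemma re_polar_mul (ρ φ : ℝ) (w : ℂ) :
    (((ρ : ℂ) * Complex.exp ((φ : ℂ) * Complex.I)) * w).re
      = ρ * Complex.abs w * Real.cos (φ + Complex.arg w) := by
  conv_lhs => rw [← Complex.abs_mul_exp_arg_mul_I w]
  rw [show (ρ : ℂ) * Complex.exp ((φ:ℂ) * Complex.I) * ((Complex.abs w : ℂ)
      * Complex.exp ((Complex.arg w : ℂ) * Complex.I))
    = ((ρ : ℂ) * (Complex.abs w : ℂ)) * Complex.exp (((φ : ℝ) + Complex.arg w : ℝ) * Complex.I) by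
      rw [Complex.ofReal_add, add_mul, Complex.exp_add]; ring]
  rw [Complex.exp_mul_I, ← Complex.ofReal_cos, ← Complex.ofReal_sin]
  rw [show ((ρ:ℂ) * (Complex.abs w : ℂ)) = ((ρ * Complex.abs w : ℝ) : ℂ) by push_cast; ring]
  simp [Complex.mul_re]
  left
  simp [← Complex.ofReal_add, Complex.cos_ofReal_re, Complex.sin_ofReal_im]

lemma re_nonpos_of_mem_sector {a b ρ φ : ℝ} (hρ : 0 ≤ ρ)
    (hφ1 : Real.pi / 2 - a ≤ φ) (hφ2 : φ ≤ 3 * Real.pi / 2 - b)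
    {w : ℂ} (hw : w ∈ sector a b) :
    (((ρ : ℂ) * Complex.exp ((φ : ℂ) * Complex.I)) * w).re ≤ 0 := by
  rw [re_polar_mul]
  have hcos : Real.cos (φ + Complex.arg w) ≤ 0 := by
    apply Real.cos_nonpos_of_pi_div_two_le_of_le
    · linarith [hw.2.1]
    · linarith [hw.2.2]
  exact mul_nonpos_of_nonneg_of_nonpos (mul_nonneg hρ (Complex.abs.nonneg w)) hcos



lemma circle_pt_mem_ball {r : ℝ} (hr0 : 0 ≤ r) (hr1 : r < 1) (θ : ℝ) :
    ((r : ℂ) * Complex.exp ((θ : ℂ) * Complex.I)) ∈ ball (0 : ℂ) 1 := by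
  rw [mem_ball_zero_iff]
  rw [show ((r:ℂ) * Complex.exp ((θ:ℂ) * Complex.I)) = (r:ℂ) * Complex.exp ((θ:ℝ) * Complex.I) by
    push_cast; ring]
  calc ‖(r:ℂ) * Complex.exp ((θ:ℝ) * Complex.I)‖
      = Complex.abs ((r:ℂ) * Complex.exp ((θ:ℝ) * Complex.I)) := rfl
    _ = r := by
        rw [map_mul, Complex.abs_exp_ofReal_mul_I, mul_one, Complex.abs_ofReal,
          _root_.abs_of_nonneg hr0]
    _ < 1 := hr1

lemma memHardy_of_bounded (p : ℝ) (hp : 0 ≤ p) (f : ℂ → ℂ)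
    (hf : ∀ z ∈ ball (0 : ℂ) 1, ‖f z‖ ≤ 1) : MemHardy p f := by
  unfold MemHardy
  have hbound : ∀ r ∈ Ico (0 : ℝ) 1,
      (∫⁻ θ in Ioc (0 : ℝ) (2 * Real.pi),
        (‖f ((r : ℂ) * Complex.exp ((θ : ℂ) * Complex.I))‖₊ : ℝ≥0∞) ^ p)
      ≤ ENNReal.ofReal (2 * Real.pi) := by
    intro r hr
    calc ∫⁻ θ in Ioc (0 : ℝ) (2 * Real.pi),
          (‖f ((r : ℂ) * Complex.exp ((θ : ℂ) * Complex.I))‖₊ : ℝ≥0∞) ^ p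
        ≤ ∫⁻ _θ in Ioc (0 : ℝ) (2 * Real.pi), 1 := by
          apply lintegral_mono
          intro θ
          apply ENNReal.rpow_le_one _ hp
          have := hf _ (circle_pt_mem_ball hr.1 hr.2 θ)
          simpa [← ENNReal.coe_one, ENNReal.coe_le_coe, ← NNReal.coe_le_coe] using this
      _ = ENNReal.ofReal (2 * Real.pi) := by
          simp [Real.two_pi_pos.le]
  calc (⨆ r ∈ Ico (0 : ℝ) 1, _) ≤ ENNReal.ofReal (2 * Real.pi) := iSup₂_le hbound
    _ < ⊤ := ENNReal.ofReal_lt_top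


lemma cos_nonpos_interval {c d : ℝ} (hcd : c < d) (hlen : d - c < Real.pi)
    (hc1 : -(2 * Real.pi) < c) (hc2 : c ≤ Real.pi) (hd1 : -Real.pi < d) (hd2 : d ≤ 2 * Real.pi)
    (hcos : ∀ x, c < x → x < d → Real.cos x ≤ 0) :
    (Real.pi / 2 ≤ c ∧ d ≤ 3 * Real.pi / 2) ∨
    (-(3 * Real.pi / 2) ≤ c ∧ d ≤ -(Real.pi / 2)) := by
  have pi_pos := Real.pi_pos
  -- c ∉ (-π/2, π/2)
  have hcA : ¬ (-(Real.pi/2) < c ∧ c < Real.pi/2) := by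
    rintro ⟨h1, h2⟩
    set x := (c + min d (Real.pi/2)) / 2 with hx
    have hxc : c < x := by
      have : c < min d (Real.pi/2) := lt_min hcd h2
      simp only [hx]; linarith
    have hxd : x < d := by
      have h3 : min d (Real.pi/2) ≤ d := min_le_left _ _
      simp only [hx]; linarith
    have hxlt : x < Real.pi/2 := by
      have h3 : min d (Real.pi/2) ≤ Real.pi/2 := min_le_right _ _
      simp only [hx]; linarith
    have hxgt : -(Real.pi/2) < x := by linarith
    have := Real.cos_pos_of_mem_Ioo ⟨hxgt, hxlt⟩
    linarith [hcos x hxc hxd]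
  -- c ∉ (-2π, -3π/2)
  have hcB : ¬ (c < -(3*Real.pi/2)) := by
    intro h2
    set x := (c + min d (-(3*Real.pi/2))) / 2 with hx
    have hxc : c < x := by
      have : c < min d (-(3*Real.pi/2)) := lt_min hcd h2
      simp only [hx]; linarith
    have hxd : x < d := by
      have h3 : min d (-(3*Real.pi/2)) ≤ d := min_le_left _ _
      simp only [hx]; linarith
    have hxlt : x < -(3*Real.pi/2) := by
      have h3 : min d (-(3*Real.pi/2)) ≤ -(3*Real.pi/2) := min_le_right _ _
      simp only [hx]; linarith
    have hcx : 0 < Real.cos x := by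
      rw [← Real.cos_add_two_pi]
      exact Real.cos_pos_of_mem_Ioo ⟨by linarith, by linarith⟩
    linarith [hcos x hxc hxd]
  -- d ∉ (-π/2, π/2)
  have hdA : ¬ (-(Real.pi/2) < d ∧ d < Real.pi/2) := by
    rintro ⟨h1, h2⟩
    set x := (max c (-(Real.pi/2)) + d) / 2 with hx
    have hmlt : max c (-(Real.pi/2)) < d := max_lt hcd h1
    have hxc : c < x := by
      have h3 : c ≤ max c (-(Real.pi/2)) := le_max_left _ _
      simp only [hx]; linarith
    have hxd : x < d := by simp only [hx]; linarith
    have hxgt : -(Real.pi/2) < x := by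
      have h3 : -(Real.pi/2) ≤ max c (-(Real.pi/2)) := le_max_right _ _
      simp only [hx]; linarith
    have := Real.cos_pos_of_mem_Ioo ⟨hxgt, by simp only [hx]; linarith⟩
    linarith [hcos x hxc hxd]
  -- d ∉ (3π/2, 2π]
  have hdB : ¬ (3*Real.pi/2 < d) := by
    intro h1
    set x := (max c (3*Real.pi/2) + d) / 2 with hx
    have hmlt : max c (3*Real.pi/2) < d := max_lt hcd h1
    have hxc : c < x := by
      have h3 : c ≤ max c (3*Real.pi/2) := le_max_left _ _
      simp only [hx]; linarith
    have hxd : x < d := by simp only [hx]; linarith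
    have hxgt : 3*Real.pi/2 < x := by
      have h3 : 3*Real.pi/2 ≤ max c (3*Real.pi/2) := le_max_right _ _
      simp only [hx]; linarith
    have hcx : 0 < Real.cos x := by
      rw [← Real.cos_sub_two_pi]
      exact Real.cos_pos_of_mem_Ioo ⟨by linarith, by linarith⟩
    linarith [hcos x hxc hxd]
  push_neg at hcA hcB hdA hdB
  -- case split on c
  rcases le_or_gt (Real.pi/2) c with hcase | hcase
  · left
    refine ⟨hcase, ?_⟩
    by_contra hcon
    push_neg at hcon
    exact absurd (hdA (by linarith)) (by push_neg; linarith)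
  · -- then c ≤ -π/2
    have hc3 : c ≤ -(Real.pi/2) := by
      rcases le_or_gt c (-(Real.pi/2)) with h | h
      · exact h
      · exact absurd (hcA h) (by push_neg; linarith)
    right
    refine ⟨hcB, ?_⟩
    have hd3 : d < Real.pi/2 := by linarith
    rcases le_or_gt d (-(Real.pi/2)) with h | h
    · exact h
    · exact absurd (hdA h) (by push_neg; linarith)

/-- If `lam ≠ 0` has no polar representation with angle in `[π/2-a, 3π/2-b]`, then there is
`θ0 ∈ (a,b)` with `cos (arg lam + θ0) > 0`. -/
lemma exists_good_angle {a b : ℝ} (ha : -Real.pi ≤ a) (ha0 : a ≤ 0) (hb0 : 0 ≤ b)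
    (hb : b ≤ Real.pi) (hab_pos : 0 < b - a) (hab_lt : b - a < Real.pi)
    {lam : ℂ} (hlam : lam ≠ 0)
    (hnot : ¬ ∃ ρ : ℝ, 0 < ρ ∧ ∃ φ : ℝ,
        Real.pi / 2 - a ≤ φ ∧ φ ≤ 3 * Real.pi / 2 - b ∧
        lam = (ρ : ℂ) * Complex.exp ((φ : ℂ) * Complex.I)) :
    ∃ θ0 : ℝ, a < θ0 ∧ θ0 < b ∧ 0 < Real.cos (Complex.arg lam + θ0) := by
  by_contra hcon
  push_neg at hcon
  set ψ := Complex.arg lam with hψ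
  have hψ1 : -Real.pi < ψ := Complex.neg_pi_lt_arg lam
  have hψ2 : ψ ≤ Real.pi := Complex.arg_le_pi lam
  have habs : 0 < Complex.abs lam := Complex.abs.pos hlam
  -- apply interval lemma with c = ψ + a, d = ψ + b
  have hkey := cos_nonpos_interval (c := ψ + a) (d := ψ + b)
    (by linarith) (by linarith) (by linarith) (by linarith) (by linarith) (by linarith)
    (fun x hx1 hx2 => by
      have := hcon (x - ψ) (by linarith) (by linarith)
      simpa [add_sub_cancel] using this)
  have hpolar : lam = ((Complex.abs lam : ℝ) : ℂ) * Complex.exp ((ψ : ℂ) * Complex.I) :=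
    (Complex.abs_mul_exp_arg_mul_I lam).symm
  rcases hkey with ⟨h1, h2⟩ | ⟨h1, h2⟩
  · exact hnot ⟨Complex.abs lam, habs, ψ, by linarith, by linarith, hpolar⟩
  · refine hnot ⟨Complex.abs lam, habs, ψ + 2 * Real.pi, by linarith, by linarith, ?_⟩
    have hexp : Complex.exp ((((ψ + 2 * Real.pi : ℝ)) : ℂ) * Complex.I)
        = Complex.exp ((ψ : ℂ) * Complex.I) := by
      rw [show (((ψ + 2 * Real.pi : ℝ)) : ℂ) * Complex.I
          = (ψ : ℂ) * Complex.I + 2 * (Real.pi : ℂ) * Complex.I by push_cast; ring,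
        Complex.exp_add, Complex.exp_two_pi_mul_I, mul_one]
    rw [hexp]
    exact hpolar

lemma mobius_normSq (w ζ : ℂ) :
    Complex.normSq (1 - (starRingEnd ℂ) w * ζ) - Complex.normSq (w - ζ)
      = (1 - Complex.normSq w) * (1 - Complex.normSq ζ) := by
  simp only [Complex.normSq_apply, Complex.sub_re, Complex.sub_im, Complex.mul_re, Complex.mul_im,
    Complex.conj_re, Complex.conj_im, Complex.one_re, Complex.one_im]
  ring

lemma schwarz_pick {f : ℂ → ℂ} (hd : DifferentiableOn ℂ f (ball 0 1))
    (hm : MapsTo f (ball 0 1) (ball 0 1)) {u : ℂ} (hu : u ∈ ball 0 1) :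
    (1 - Complex.abs (f 0)) * (1 - Complex.abs u) / 4 ≤ 1 - Complex.abs (f u) := by
  have h0mem : (0 : ℂ) ∈ ball (0 : ℂ) 1 := mem_ball_self zero_lt_one
  set w := f 0 with hw
  have hwlt : Complex.abs w < 1 := by
    have := hm h0mem; rwa [mem_ball_zero_iff] at this
  have hflt : ∀ z ∈ ball (0:ℂ) 1, Complex.abs (f z) < 1 := by
    intro z hz; have := hm hz; rwa [mem_ball_zero_iff] at this
  have hden : ∀ z ∈ ball (0:ℂ) 1, (1 : ℂ) - (starRingEnd ℂ) w * f z ≠ 0 := by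
    intro z hz hzero
    have h1 : (1:ℂ) = (starRingEnd ℂ) w * f z := by
      have := sub_eq_zero.mp hzero; linear_combination this
    have : (1:ℝ) = Complex.abs ((starRingEnd ℂ) w * f z) := by
      rw [← h1]; simp
    rw [map_mul, Complex.abs_conj] at this
    nlinarith [hflt z hz, Complex.abs.nonneg w, Complex.abs.nonneg (f z)]
  set M : ℂ → ℂ := fun z => (w - f z) / (1 - (starRingEnd ℂ) w * f z) with hM
  have hMd : DifferentiableOn ℂ M (ball 0 1) := by
    apply DifferentiableOn.div
    · exact (differentiableOn_const w).sub hd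
    · exact (differentiableOn_const 1).sub ((differentiableOn_const _).mul hd)
    · exact hden
  have habsM : ∀ z ∈ ball (0:ℂ) 1, Complex.abs (M z) < 1 := by
    intro z hz
    have hkey := mobius_normSq w (f z)
    have hpos : 0 < (1 - Complex.normSq w) * (1 - Complex.normSq (f z)) := by
      have h1 : Complex.normSq w < 1 := by
        rw [← Complex.sq_abs]; nlinarith [Complex.abs.nonneg w]
      have h2 : Complex.normSq (f z) < 1 := by
        rw [← Complex.sq_abs]; nlinarith [hflt z hz, Complex.abs.nonneg (f z)]
      nlinarith
    have hlt : Complex.normSq (w - f z) < Complex.normSq (1 - (starRingEnd ℂ) w * f z) := by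
      linarith
    rw [hM]
    simp only [map_div₀]
    rw [div_lt_one]
    · rw [← Complex.sq_abs, ← Complex.sq_abs] at hlt
      nlinarith [Complex.abs.nonneg (w - f z), Complex.abs.nonneg (1 - (starRingEnd ℂ) w * f z)]
    · exact Complex.abs.pos (hden z hz)
  have hMmaps : MapsTo M (ball 0 1) (ball 0 1) := by
    intro z hz; rw [mem_ball_zero_iff]; exact habsM z hz
  have hM0 : M 0 = 0 := by simp [hM, ← hw]
  have hu' : Complex.abs u < 1 := by rwa [mem_ball_zero_iff] at hu
  have hschwarz : Complex.abs (M u) ≤ Complex.abs u :=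
    Complex.abs_le_abs_of_mapsTo_ball_self hMd hMmaps hM0 hu'
  -- unwind
  have hdenu := hden u hu
  have hMu_mul : M u * (1 - (starRingEnd ℂ) w * f u) = w - f u := by
    rw [hM]; exact div_mul_cancel₀ _ hdenu
  have hnormSqeq : Complex.normSq (w - f u)
      = Complex.normSq (M u) * Complex.normSq (1 - (starRingEnd ℂ) w * f u) := by
    rw [← hMu_mul, map_mul]
  have hkey := mobius_normSq w (f u)
  simp only [← Complex.sq_abs] at hkey hnormSqeq
  set A := Complex.abs (f u) with hA
  set W := Complex.abs w with hW
  set U := Complex.abs u with hU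
  set m := Complex.abs (M u) with hm2
  set D := Complex.abs (1 - (starRingEnd ℂ) w * f u) with hD
  have hDlow : 1 - W ≤ D := by
    have h1 : Complex.abs ((starRingEnd ℂ) w * f u) ≤ W := by
      rw [map_mul, Complex.abs_conj]
      nlinarith [hflt u hu, Complex.abs.nonneg w, Complex.abs.nonneg (f u)]
    calc 1 - W ≤ 1 - Complex.abs ((starRingEnd ℂ) w * f u) := by linarith
      _ ≤ D := by
          rw [hD]
          have h2 := norm_sub_norm_le (1 : ℂ) ((starRingEnd ℂ) w * f u)
          simpa [Complex.norm_eq_abs] using h2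
  have hA1 : A < 1 := hflt u hu
  have hW1 : W < 1 := hwlt
  have hU1 : U < 1 := hu'
  have hA0 : 0 ≤ A := Complex.abs.nonneg _
  have hW0 : 0 ≤ W := Complex.abs.nonneg _
  have hU0 : 0 ≤ U := Complex.abs.nonneg _
  have hm0 : 0 ≤ m := Complex.abs.nonneg _
  have hmU : m ≤ U := hschwarz
  have heq : D ^ 2 * (1 - m ^ 2) = (1 - W ^ 2) * (1 - A ^ 2) := by
    linear_combination hkey + hnormSqeq
  have hDsq : (1 - W) ^ 2 ≤ D ^ 2 := by nlinarith
  have hmsq : 1 - U ^ 2 ≤ 1 - m ^ 2 := by nlinarith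
  have hstep : (1 - W) ^ 2 * (1 - U ^ 2) ≤ D ^ 2 * (1 - m ^ 2) := by
    apply mul_le_mul hDsq hmsq (by nlinarith) (sq_nonneg D)
  have h1W : (0:ℝ) < 1 - W := by linarith
  have hcancel : (1 - W) * (1 - U ^ 2) ≤ (1 + W) * (1 - A ^ 2) := by
    have h := hstep.trans_eq heq
    have h2 : (1 - W) * ((1 - W) * (1 - U ^ 2)) ≤ (1 - W) * ((1 + W) * (1 - A ^ 2)) := by
      nlinarith [h]
    exact le_of_mul_le_mul_left h2 h1W
  have e1 : (1 - W) * (1 - U) ≤ (1 - W) * (1 - U ^ 2) := by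
    nlinarith [mul_nonneg (mul_nonneg h1W.le hU0) (sub_nonneg.2 hU1.le)]
  have e2 : (1 + W) * (1 - A ^ 2) ≤ 4 * (1 - A) := by
    have t1 : (1 + W) * (1 + A) ≤ 4 := by nlinarith
    nlinarith [mul_nonneg (sub_nonneg.2 hA1.le) (sub_nonneg.2 t1)]
  linarith

/-! ### The explicit conformal map onto the sector -/

def Psi (a b : ℝ) : ℂ → ℂ := fun u =>
  Complex.exp ((((a + b) / 2 : ℝ) : ℂ) * Complex.I) *
    ((1 + u) / (1 - u)) ^ (((b - a) / Real.pi : ℝ) : ℂ)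

lemma re_cayley_pos {u : ℂ} (hu : u ∈ ball (0 : ℂ) 1) : 0 < ((1 + u) / (1 - u)).re := by
  have hu' : Complex.abs u < 1 := by rwa [mem_ball_zero_iff] at hu
  have hns : Complex.normSq u < 1 := by
    rw [← Complex.sq_abs]; nlinarith [Complex.abs.nonneg u]
  have hden : (1 : ℂ) - u ≠ 0 := by
    intro hz
    have : u = 1 := by linear_combination -hz
    rw [this] at hu'; simp at hu'
  rw [Complex.div_re, ← add_div]
  have hnum : (1 + u).re * (1 - u).re + (1 + u).im * (1 - u).im = 1 - Complex.normSq u := by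
    simp [Complex.normSq_apply]; ring
  rw [hnum]
  exact div_pos (by linarith) (Complex.normSq_pos.mpr hden)

lemma cpow_polar {v : ℂ} (hv : v ≠ 0) (s : ℝ) :
    v ^ ((s : ℝ) : ℂ) = ((Complex.abs v ^ s : ℝ) : ℂ) *
      Complex.exp (((s * Complex.arg v : ℝ) : ℂ) * Complex.I) := by
  rw [Complex.cpow_def_of_ne_zero hv]
  rw [Complex.log, Complex.norm_eq_abs]
  have habs : (0:ℝ) < Complex.abs v := Complex.abs.pos hv
  rw [show (↑(Real.log (Complex.abs v)) + ↑(Complex.arg v) * Complex.I) * (s : ℂ)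
      = ((s * Real.log (Complex.abs v) : ℝ) : ℂ) + ((s * Complex.arg v : ℝ) : ℂ) * Complex.I by
    push_cast; ring]
  rw [Complex.exp_add, ← Complex.ofReal_exp]
  congr 2
  rw [Real.rpow_def_of_pos habs]
  ring_nf

lemma psi_mem_sector {a b : ℝ} (ha : -Real.pi ≤ a) (hb : b ≤ Real.pi)
    (hab_pos : 0 < b - a) (hab_lt : b - a < Real.pi)
    {u : ℂ} (hu : u ∈ ball (0 : ℂ) 1) : Psi a b u ∈ sector a b := by
  have pi_pos := Real.pi_pos
  set s := (b - a) / Real.pi with hs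
  have hs0 : 0 < s := div_pos hab_pos pi_pos
  have hs1 : s < 1 := (div_lt_one pi_pos).mpr hab_lt
  set v := (1 + u) / (1 - u) with hv
  have hvre : 0 < v.re := re_cayley_pos hu
  have hvne : v ≠ 0 := by
    intro hz; rw [hz] at hvre; simp at hvre
  have harg : |Complex.arg v| < Real.pi / 2 :=
    Complex.abs_arg_lt_pi_div_two_iff.mpr (Or.inl hvre)
  set β := Complex.arg v with hβ
  set γ := (a + b) / 2 + s * β with hγ
  have hγa : a < γ := by
    have : -(Real.pi/2) < β := by have := abs_lt.mp harg; linarith [this.1, this.2]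
    have h2 : -((b-a)/2) < s * β := by
      have : s * (-(Real.pi/2)) < s * β := by
        apply mul_lt_mul_of_pos_left this hs0
      calc -((b-a)/2) = s * (-(Real.pi/2)) := by rw [hs]; field_simp
        _ < s * β := this
    rw [hγ]; linarith
  have hγb : γ < b := by
    have : β < Real.pi/2 := by have := abs_lt.mp harg; linarith [this.1, this.2]
    have h2 : s * β < (b-a)/2 := by
      have : s * β < s * (Real.pi/2) := mul_lt_mul_of_pos_left this hs0
      calc s * β < s * (Real.pi/2) := this
        _ = (b-a)/2 := by rw [hs]; field_simp
    rw [hγ]; linarith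
  have hpolar : Psi a b u = ((Complex.abs v ^ s : ℝ) : ℂ) *
      Complex.exp ((γ : ℂ) * Complex.I) := by
    rw [Psi, ← hv, ← hs, cpow_polar hvne, ← hβ]
    rw [show (γ : ℂ) * Complex.I = (((a+b)/2 : ℝ) : ℂ) * Complex.I
        + ((s * β : ℝ) : ℂ) * Complex.I by rw [hγ]; push_cast; ring]
    rw [Complex.exp_add]; ring
  have hrpos : (0:ℝ) < Complex.abs v ^ s := Real.rpow_pos_of_pos (Complex.abs.pos hvne) s
  refine ⟨?_, ?_, ?_⟩
  · rw [hpolar]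
    apply mul_ne_zero
    · exact_mod_cast hrpos.ne'
    · exact Complex.exp_ne_zero _
  · rw [hpolar, polar_arg hrpos (by linarith) (by linarith)]; exact hγa
  · rw [hpolar, polar_arg hrpos (by linarith) (by linarith)]; exact hγb

lemma psi_diff {a b : ℝ} : DifferentiableOn ℂ (Psi a b) (ball (0 : ℂ) 1) := by
  intro u hu
  apply DifferentiableAt.differentiableWithinAt
  apply DifferentiableAt.const_mul
  have hden : (1 : ℂ) - u ≠ 0 := by
    have hu' : Complex.abs u < 1 := by rwa [mem_ball_zero_iff] at hu
    intro hz
    have : u = 1 := by linear_combination -hz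
    rw [this] at hu'; simp at hu'
  have hdv : DifferentiableAt ℂ (fun u : ℂ => (1 + u) / (1 - u)) u := by
    apply DifferentiableAt.div
    · exact (differentiableAt_const _).add differentiableAt_id
    · exact (differentiableAt_const _).sub differentiableAt_id
    · exact hden
  apply DifferentiableAt.cpow hdv (differentiableAt_const _)
  rw [Complex.mem_slitPlane_iff]
  exact Or.inl (re_cayley_pos hu)

lemma psi_special {a b θ0 : ℝ} (hab_pos : 0 < b - a) (hθa : a < θ0) (hθb : θ0 < b)
    {R : ℝ} (hR : 1 ≤ R) :
    ∃ u : ℂ, u ∈ ball (0 : ℂ) 1 ∧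
      Real.cos ((θ0 - (a + b) / 2) * (Real.pi / (b - a))) / (2 * R) ≤ 1 - Complex.abs u ∧
      0 < Real.cos ((θ0 - (a + b) / 2) * (Real.pi / (b - a))) ∧
      Psi a b u = ((R ^ ((b - a) / Real.pi) : ℝ) : ℂ) *
        Complex.exp ((θ0 : ℂ) * Complex.I) := by
  have pi_pos := Real.pi_pos
  set s := (b - a) / Real.pi with hs
  have hs0 : 0 < s := div_pos hab_pos pi_pos
  set β := (θ0 - (a + b) / 2) * (Real.pi / (b - a)) with hβ
  have hβlt : |β| < Real.pi / 2 := by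
    rw [abs_lt]
    constructor
    · rw [hβ]
      have h1 : -((b-a)/2) < θ0 - (a+b)/2 := by linarith
      have := mul_lt_mul_of_pos_right h1 (div_pos pi_pos hab_pos)
      calc -(Real.pi/2) = -((b-a)/2) * (Real.pi/(b-a)) := by field_simp
        _ < _ := this
    · rw [hβ]
      have h1 : θ0 - (a+b)/2 < (b-a)/2 := by linarith
      have := mul_lt_mul_of_pos_right h1 (div_pos pi_pos hab_pos)
      calc (θ0 - (a+b)/2) * (Real.pi/(b-a)) < ((b-a)/2) * (Real.pi/(b-a)) := this
        _ = Real.pi/2 := by field_simp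
  have hcosβ : 0 < Real.cos β := by
    have := abs_lt.mp hβlt
    exact Real.cos_pos_of_mem_Ioo ⟨this.1, this.2⟩
  have hR0 : (0:ℝ) < R := by linarith
  set v := ((R : ℝ) : ℂ) * Complex.exp (((β : ℝ) : ℂ) * Complex.I) with hv
  have hvabs : Complex.abs v = R := polar_abs R hR0.le β
  have hvarg : Complex.arg v = β := polar_arg hR0 (by have := abs_lt.mp hβlt; linarith) (by have := abs_lt.mp hβlt; linarith)
  have hvre : v.re = R * Real.cos β := by
    rw [hv, Complex.exp_mul_I, ← Complex.ofReal_cos, ← Complex.ofReal_sin]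
    simp [Complex.mul_re]
    exact Or.inl (Complex.cos_ofReal_re β)
  have hvne : v ≠ 0 := by
    intro hz; rw [hz] at hvabs; simp at hvabs; linarith
  have hv1 : v + 1 ≠ 0 := by
    intro hz
    have : (v + 1).re = 0 := by rw [hz]; simp
    rw [Complex.add_re, hvre, Complex.one_re] at this
    nlinarith
  set u := (v - 1) / (v + 1) with hu
  have hPQ : Complex.normSq (v + 1) - Complex.normSq (v - 1) = 4 * v.re := by
    simp [Complex.normSq_apply]; ring
  set P := Complex.normSq (v + 1) with hP
  set Q := Complex.normSq (v - 1) with hQ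
  have hPpos : 0 < P := Complex.normSq_pos.mpr hv1
  have hQ0 : 0 ≤ Q := Complex.normSq_nonneg _
  have hQP : Q < P := by rw [hvre] at hPQ; nlinarith
  have hu2 : Complex.abs u ^ 2 = Q / P := by
    rw [hu, map_div₀, div_pow, Complex.sq_abs, Complex.sq_abs]
  have huabs1 : Complex.abs u < 1 := by
    have h2 : Complex.abs u ^ 2 < 1 := by
      rw [hu2]; rw [div_lt_one hPpos]; exact hQP
    nlinarith [Complex.abs.nonneg u]
  have humem : u ∈ ball (0 : ℂ) 1 := by rwa [mem_ball_zero_iff]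
  -- the quantitative bound
  have hPle : P ≤ 4 * R ^ 2 := by
    have habs1 : Complex.abs (v + 1) ≤ R + 1 := by
      calc Complex.abs (v + 1) ≤ Complex.abs v + Complex.abs 1 := Complex.abs.add_le v 1
        _ = R + 1 := by rw [hvabs]; simp
    have : Complex.normSq (v+1) = Complex.abs (v+1) ^ 2 := (Complex.sq_abs _).symm
    rw [← hP] at this
    rw [this]
    nlinarith [Complex.abs.nonneg (v+1)]
  have hbound : Real.cos β / (2 * R) ≤ 1 - Complex.abs u := by
    have h1 : 1 - Complex.abs u ^ 2 = (P - Q) / P := by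
      rw [hu2]; field_simp
    have h2 : (P - Q) / (4 * R ^ 2) ≤ (P - Q) / P :=
      div_le_div_of_nonneg_left (by linarith) hPpos hPle
    have h3 : (P - Q) / (4 * R ^ 2) = Real.cos β / R := by
      rw [hPQ, hvre]; field_simp
    have h4 : Real.cos β / R ≤ 1 - Complex.abs u ^ 2 := by
      rw [h1]; rw [← h3]; exact h2
    have h5 : 1 - Complex.abs u ^ 2 ≤ 2 * (1 - Complex.abs u) := by
      nlinarith [Complex.abs.nonneg u, huabs1]
    have h6 : Real.cos β / (2 * R) = (Real.cos β / R) / 2 := by ring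
    rw [h6]
    linarith
  -- the value of Psi at u
  have hone_sub : (1 : ℂ) - u ≠ 0 := by
    intro hz
    have hu1 : u = 1 := by linear_combination -hz
    rw [hu1] at huabs1
    simp at huabs1
  have hcay : (1 + u) / (1 - u) = v := by
    rw [hu]
    rw [div_eq_iff hone_sub]
    rw [hu]
    field_simp
    ring
  have hsβ : s * β = θ0 - (a + b) / 2 := by
    rw [hs, hβ]; field_simp
  refine ⟨u, humem, hbound, hcosβ, ?_⟩
  rw [Psi, ← hs, hcay, cpow_polar hvne s, hvabs, hvarg]
  rw [show ((θ0 : ℝ) : ℂ) * Complex.I = (((a+b)/2 : ℝ) : ℂ) * Complex.I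
      + ((s * β : ℝ) : ℂ) * Complex.I by rw [hsβ]; push_cast; ring]
  rw [Complex.exp_add]
  ring
lemma cauchy_bound {G : ℂ → ℂ} (hG : DifferentiableOn ℂ G (ball 0 1)) {S : ℝ}
    (hS : ∀ r : ℝ, 0 ≤ r → r < 1 →
      (∫ θ in (0:ℝ)..(2*Real.pi), ‖G ((r:ℂ) * Complex.exp ((θ:ℂ) * Complex.I))‖) ≤ S)
    {z : ℂ} (hz : z ∈ ball (0:ℂ) 1) : ‖G z‖ * (1 - Complex.abs z) ≤ S / Real.pi := by
  have pi_pos := Real.pi_pos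
  have hz' : Complex.abs z < 1 := by rwa [mem_ball_zero_iff] at hz
  have habs0 : 0 ≤ Complex.abs z := Complex.abs.nonneg z
  set r : ℝ := (1 + Complex.abs z) / 2 with hr
  have hzr : Complex.abs z < r := by rw [hr]; linarith
  have hr0 : 0 < r := by rw [hr]; linarith
  have hr1 : r < 1 := by rw [hr]; linarith
  have hsub : r - Complex.abs z = (1 - Complex.abs z) / 2 := by rw [hr]; ring
  -- Cauchy integral formula
  have hdc : DiffContOnCl ℂ G (ball (0:ℂ) r) := by
    constructor
    · exact hG.mono (ball_subset_ball hr1.le)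
    · have hcl : closure (ball (0:ℂ) r) = closedBall (0:ℂ) r := closure_ball 0 hr0.ne'
      rw [hcl]
      exact hG.continuousOn.mono (closedBall_subset_ball hr1)
  have hzmem : z ∈ ball (0:ℂ) r := by rwa [mem_ball_zero_iff]
  have hcf := hdc.circleIntegral_sub_inv_smul hzmem
  -- norm of the circle integral
  have hGz : ‖G z‖ = ‖∮ w in C(0, r), (w - z)⁻¹ • G w‖ / (2 * Real.pi) := by
    rw [hcf]
    rw [norm_smul]
    simp [Complex.abs_of_nonneg, abs_of_pos pi_pos]
  -- continuity of the integrands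
  have hcont : ContinuousOn (fun θ : ℝ => G (circleMap 0 r θ)) (uIcc 0 (2*Real.pi)) := by
    apply hG.continuousOn.comp (continuous_circleMap 0 r).continuousOn
    intro θ _
    rw [mem_ball_zero_iff]
    rw [Complex.norm_eq_abs, abs_circleMap_zero, abs_of_pos hr0]
    exact hr1
  have hcd : ContinuousOn (fun θ : ℝ => deriv (circleMap 0 r) θ) (uIcc 0 (2*Real.pi)) := by
    simp only [deriv_circleMap]
    exact ((continuous_circleMap 0 r).mul continuous_const).continuousOn
  have hinv : ContinuousOn (fun θ : ℝ => (circleMap 0 r θ - z)⁻¹) (uIcc 0 (2*Real.pi)) := by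
    apply ContinuousOn.inv₀
    · exact ((continuous_circleMap 0 r).continuousOn.sub continuousOn_const)
    · intro θ _ hzero
      have h1 : circleMap 0 r θ = z := by linear_combination hzero
      have h2 : Complex.abs (circleMap 0 r θ) = r := by
        rw [abs_circleMap_zero, abs_of_pos hr0]
      rw [h1] at h2
      rw [h2] at hzr
      exact lt_irrefl _ hzr
  have hcont2 : ContinuousOn
      (fun θ : ℝ => ‖deriv (circleMap 0 r) θ • (circleMap 0 r θ - z)⁻¹ • G (circleMap 0 r θ)‖)
      (uIcc 0 (2*Real.pi)) := (hcd.smul (hinv.smul hcont)).norm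
  have hlow : ∀ θ : ℝ, r - Complex.abs z ≤ Complex.abs (circleMap 0 r θ - z) := by
    intro θ
    have h1 : Complex.abs (circleMap 0 r θ) = r := by
      rw [abs_circleMap_zero, abs_of_pos hr0]
    calc r - Complex.abs z = Complex.abs (circleMap 0 r θ) - Complex.abs z := by rw [h1]
      _ ≤ Complex.abs (circleMap 0 r θ - z) := by
          exact norm_sub_norm_le (circleMap 0 r θ) z
  -- pointwise bound
  have hpt : ∀ θ ∈ Icc (0:ℝ) (2*Real.pi),
      ‖deriv (circleMap 0 r) θ • (circleMap 0 r θ - z)⁻¹ • G (circleMap 0 r θ)‖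
        ≤ (r / (r - Complex.abs z)) * ‖G (circleMap 0 r θ)‖ := by
    intro θ _
    rw [norm_smul, norm_smul, deriv_circleMap]
    have hd1 : ‖circleMap 0 r θ * Complex.I‖ = r := by
      simp [Complex.norm_eq_abs, abs_circleMap_zero, abs_of_pos hr0]
    rw [hd1]
    have hd2 : ‖(circleMap 0 r θ - z)⁻¹‖ ≤ (r - Complex.abs z)⁻¹ := by
      rw [Complex.norm_eq_abs, map_inv₀]
      exact inv_anti₀ (by linarith) (hlow θ)
    calc r * (‖(circleMap 0 r θ - z)⁻¹‖ * ‖G (circleMap 0 r θ)‖)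
        ≤ r * ((r - Complex.abs z)⁻¹ * ‖G (circleMap 0 r θ)‖) := by
          apply mul_le_mul_of_nonneg_left _ hr0.le
          apply mul_le_mul_of_nonneg_right hd2 (norm_nonneg _)
      _ = (r / (r - Complex.abs z)) * ‖G (circleMap 0 r θ)‖ := by ring
  -- integral bound
  have hintle : ‖∮ w in C(0, r), (w - z)⁻¹ • G w‖
      ≤ (r / (r - Complex.abs z)) * S := by
    have h2pi : (0:ℝ) ≤ 2 * Real.pi := by linarith
    calc ‖∮ w in C(0, r), (w - z)⁻¹ • G w‖
        ≤ ∫ θ in (0:ℝ)..(2*Real.pi),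
            ‖deriv (circleMap 0 r) θ • (circleMap 0 r θ - z)⁻¹ • G (circleMap 0 r θ)‖ := by
          exact intervalIntegral.norm_integral_le_integral_norm h2pi
      _ ≤ ∫ θ in (0:ℝ)..(2*Real.pi),
            (r / (r - Complex.abs z)) * ‖G (circleMap 0 r θ)‖ := by
          apply intervalIntegral.integral_mono_on h2pi
          · exact hcont2.intervalIntegrable
          · exact (continuousOn_const.mul hcont.norm).intervalIntegrable
          · exact hpt
      _ = (r / (r - Complex.abs z)) * ∫ θ in (0:ℝ)..(2*Real.pi), ‖G (circleMap 0 r θ)‖ := by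
          rw [intervalIntegral.integral_const_mul]
      _ ≤ (r / (r - Complex.abs z)) * S := by
          apply mul_le_mul_of_nonneg_left _ (by apply div_nonneg hr0.le; linarith)
          have := hS r hr0.le hr1
          calc (∫ θ in (0:ℝ)..(2*Real.pi), ‖G (circleMap 0 r θ)‖)
              = ∫ θ in (0:ℝ)..(2*Real.pi), ‖G ((r:ℂ) * Complex.exp ((θ:ℂ) * Complex.I))‖ := by
                apply intervalIntegral.integral_congr
                intro θ _
                simp [circleMap]
            _ ≤ S := this
  have hSnn : 0 ≤ S := by
    have h0 := hS 0 le_rfl one_pos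
    have h1 : (0:ℝ) ≤ ∫ θ in (0:ℝ)..(2*Real.pi), ‖G ((0:ℂ) * Complex.exp ((θ:ℂ) * Complex.I))‖ := by
      apply intervalIntegral.integral_nonneg (by linarith)
      intro θ _; exact norm_nonneg _
    exact le_trans h1 h0
  have hne : r - Complex.abs z ≠ 0 := by linarith
  have h1z : 1 - Complex.abs z = 2 * (r - Complex.abs z) := by rw [hsub]; ring
  have hkey2 : ‖∮ w in C(0, r), (w - z)⁻¹ • G w‖ * (1 - Complex.abs z) ≤ 2 * S := by
    calc ‖∮ w in C(0, r), (w - z)⁻¹ • G w‖ * (1 - Complex.abs z)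
        ≤ (r / (r - Complex.abs z)) * S * (1 - Complex.abs z) :=
          mul_le_mul_of_nonneg_right hintle (by linarith)
      _ = 2 * r * S := by rw [h1z]; field_simp
      _ ≤ 2 * S := by nlinarith
  rw [hGz, div_mul_eq_mul_div, div_le_div_iff₀ (by linarith) pi_pos]
  nlinarith [hkey2, pi_pos]
lemma deriv_ne_zero_of_injOn {h : ℂ → ℂ} (hd : DifferentiableOn ℂ h (ball 0 1))
    (hi : InjOn h (ball 0 1)) {z0 : ℂ} (hz0 : z0 ∈ ball (0:ℂ) 1) : deriv h z0 ≠ 0 := by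
  intro hder
  have hA : AnalyticAt ℂ h z0 := hd.analyticAt (isOpen_ball.mem_nhds hz0)
  set f : ℂ → ℂ := fun z => h z - h z0 with hf
  have hAf : AnalyticAt ℂ f z0 := hA.sub analyticAt_const
  have hf0 : f z0 = 0 := by simp [hf]
  -- f is not eventually zero
  have hnev : ¬ (∀ᶠ z in 𝓝 z0, f z = 0) := by
    intro hev
    obtain ⟨ε, hε, hball⟩ := Metric.eventually_nhds_iff.mp (hev.and
      (isOpen_ball.eventually_mem hz0))
    set z1 : ℂ := z0 + ((ε / 2 : ℝ) : ℂ) with hz1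
    have hdist : dist z1 z0 < ε := by
      rw [hz1, dist_eq_norm, add_sub_cancel_left, Complex.norm_eq_abs, Complex.abs_ofReal,
        abs_of_pos (by linarith)]
      linarith
    obtain ⟨hfz1, hz1mem⟩ := hball hdist
    have hhz : h z1 = h z0 := by
      have := sub_eq_zero.mp hfz1; exact this
    have : z1 = z0 := hi hz1mem hz0 hhz
    rw [hz1] at this
    have : ((ε / 2 : ℝ) : ℂ) = 0 := by linear_combination this
    rw [Complex.ofReal_eq_zero] at this
    linarith
  -- finite order n
  have hord_ne : analyticOrderAt f z0 ≠ ⊤ := fun htop => hnev (analyticOrderAt_eq_top.mp htop)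
  obtain ⟨n, hn⟩ := WithTop.ne_top_iff_exists.mp hord_ne
  obtain ⟨g, hg, hgz0, hev⟩ := hAf.analyticOrderAt_eq_natCast.mp hn.symm
  -- n ≥ 2
  have hn0 : n ≠ 0 := by
    intro h0
    rw [h0] at hev
    have := hev.self_of_nhds
    simp [hf0] at this
    exact hgz0 this.symm
  have hderf : deriv f z0 = 0 := by
    rw [hf]
    rw [show (fun z => h z - h z0) = fun z => h z - h z0 from rfl]
    rw [deriv_sub_const]
    exact hder
  have hn1 : n ≠ 1 := by
    intro h1
    rw [h1] at hev
    have hev' : ∀ᶠ z in 𝓝 z0, f z = (z - z0) * g z := by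
      filter_upwards [hev] with z hz using by rw [hz]; simp [smul_eq_mul]
    have hevEq : f =ᶠ[𝓝 z0] (fun z => (z - z0) * g z) := hev'
    have hderiv_eq : deriv f z0 = deriv (fun z => (z - z0) * g z) z0 := hevEq.deriv_eq
    have hprod : HasDerivAt (fun z => (z - z0) * g z) (g z0) z0 := by
      have h1' : HasDerivAt (fun z : ℂ => z - z0) 1 z0 := (hasDerivAt_id z0).sub_const z0
      have h2' : HasDerivAt g (deriv g z0) z0 := hg.differentiableAt.hasDerivAt
      have := h1'.fun_mul h2'
      simpa using this
    rw [hprod.deriv] at hderiv_eq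
    rw [hderf] at hderiv_eq
    exact hgz0 hderiv_eq.symm
  have hn2 : 2 ≤ n := by omega
  have hnC : (n : ℂ) ≠ 0 := Nat.cast_ne_zero.mpr hn0
  -- n-th root of g
  set c : ℂ := Complex.exp (Complex.log (g z0) / n) with hc
  have hcne : c ≠ 0 := Complex.exp_ne_zero _
  have hcn : c ^ n = g z0 := by
    rw [hc, ← Complex.exp_nat_mul]
    rw [show (n : ℂ) * (Complex.log (g z0) / n) = Complex.log (g z0) by field_simp]
    exact Complex.exp_log hgz0
  set ρ : ℂ → ℂ := fun z => c * Complex.exp (Complex.log (g z / g z0) / n) with hρ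
  have hρan : AnalyticAt ℂ ρ z0 := by
    apply AnalyticAt.mul analyticAt_const
    apply analyticAt_cexp.comp
    apply AnalyticAt.div _ analyticAt_const hnC
    apply (analyticAt_clog _).comp (hg.div analyticAt_const hgz0)
    rw [Pi.div_apply, div_self hgz0]
    exact Complex.one_mem_slitPlane
  have hρz0 : ρ z0 = c := by
    rw [hρ]
    simp only [div_self hgz0, Complex.log_one, zero_div, Complex.exp_zero, mul_one]
  -- g = ρ^n eventually
  have hgne : ∀ᶠ z in 𝓝 z0, g z ≠ 0 := hg.continuousAt.eventually_ne hgz0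
  have hgρ : ∀ᶠ z in 𝓝 z0, g z = ρ z ^ n := by
    filter_upwards [hgne] with z hz
    rw [hρ, mul_pow, hcn, ← Complex.exp_nat_mul,
      show (n : ℂ) * (Complex.log (g z / g z0) / n) = Complex.log (g z / g z0) by field_simp,
      Complex.exp_log (div_ne_zero hz hgz0)]
    field_simp
  set φ : ℂ → ℂ := fun z => (z - z0) * ρ z with hφ
  have hφ0 : φ z0 = 0 := by rw [hφ]; simp
  have hfφ : ∀ᶠ z in 𝓝 z0, f z = φ z ^ n := by
    filter_upwards [hev, hgρ] with z h1 h2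
    rw [h1, h2, hφ]
    simp only [smul_eq_mul, mul_pow]
  -- strict derivative of φ at z0 is c ≠ 0
  have hφan : AnalyticAt ℂ φ z0 := ((analyticAt_id.sub analyticAt_const).mul hρan)
  have hφderiv : HasDerivAt φ c z0 := by
    have h1' : HasDerivAt (fun z : ℂ => z - z0) 1 z0 := (hasDerivAt_id z0).sub_const z0
    have h2' : HasDerivAt ρ (deriv ρ z0) z0 := hρan.differentiableAt.hasDerivAt
    have := h1'.fun_mul h2'
    simpa [hρz0] using this
  obtain ⟨pser, hpser⟩ := hφan
  have hsd := hpser.hasStrictDerivAt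
  have hval : (pser 1 fun _ => 1) = c := hpser.hasDerivAt.unique hφderiv
  rw [hval] at hsd
  -- the image of a neighborhood is a neighborhood of 0
  have hmap : Filter.map φ (𝓝 z0) = 𝓝 (0 : ℂ) := by
    have := hsd.map_nhds_eq hcne
    rwa [hφ0] at this
  have hWmem : {z : ℂ | f z = φ z ^ n ∧ z ∈ ball (0:ℂ) 1} ∈ 𝓝 z0 := by
    have h2 : ∀ᶠ z in 𝓝 z0, z ∈ ball (0:ℂ) 1 := isOpen_ball.eventually_mem hz0
    exact (hfφ.and h2)
  have himg : φ '' {z : ℂ | f z = φ z ^ n ∧ z ∈ ball (0:ℂ) 1} ∈ 𝓝 (0:ℂ) := by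
    rw [← hmap]
    exact Filter.image_mem_map hWmem
  obtain ⟨δ, hδ, hδsub⟩ := Metric.mem_nhds_iff.mp himg
  set ζ : ℂ := ((δ / 2 : ℝ) : ℂ) with hζ
  have hζabs : Complex.abs ζ = δ / 2 := by
    rw [hζ, Complex.abs_ofReal, abs_of_pos (by linarith)]
  have hζne : ζ ≠ 0 := by
    rw [hζ, Complex.ofReal_ne_zero]; linarith
  set ω : ℂ := Complex.exp (((2 * Real.pi / n : ℝ) : ℂ) * Complex.I) with hω
  have hωabs : Complex.abs ω = 1 := Complex.abs_exp_ofReal_mul_I _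
  have hωpow : ω ^ n = 1 := by
    rw [hω, ← Complex.exp_nat_mul]
    rw [show (n:ℂ) * (((2 * Real.pi / n : ℝ) : ℂ) * Complex.I) = 2 * (Real.pi : ℂ) * Complex.I by
      push_cast; field_simp]
    exact Complex.exp_two_pi_mul_I
  have hωne1 : ω ≠ 1 := by
    rw [hω]
    intro habs1
    obtain ⟨m, hm⟩ := Complex.exp_eq_one_iff.mp habs1
    have hπ := Real.pi_pos
    have hn2R : (2:ℝ) ≤ (n:ℝ) := by exact_mod_cast hn2
    have hm' : ((2 * Real.pi / n : ℝ) : ℂ) = (m : ℂ) * (2 * (Real.pi : ℂ)) := by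
      apply mul_right_cancel₀ Complex.I_ne_zero
      rw [hm]; ring
    have him2 : 2 * Real.pi / (n:ℝ) = (m:ℝ) * (2 * Real.pi) := by exact_mod_cast hm'
    have hmpos : (0:ℝ) < (m:ℝ) := by
      have hq : 0 < 2 * Real.pi / (n:ℝ) := by positivity
      nlinarith
    have hmZ : (0:ℤ) < m := by exact_mod_cast hmpos
    have hm1 : (1:ℝ) ≤ (m:ℝ) := by exact_mod_cast (by omega : (1:ℤ) ≤ m)
    have : 2 * Real.pi / (n:ℝ) ≤ Real.pi := by
      rw [div_le_iff₀ (by linarith)]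
      nlinarith
    nlinarith [him2, hm1, hπ]
  have hζω : ζ * ω ≠ ζ := by
    intro habs2
    have habs3 : ζ * ω = ζ * 1 := by rw [mul_one]; exact habs2
    exact hωne1 (mul_left_cancel₀ hζne habs3)
  have hζmem : ζ ∈ ball (0:ℂ) δ := by
    rw [mem_ball_zero_iff, Complex.norm_eq_abs, hζabs]; linarith
  have hζωmem : ζ * ω ∈ ball (0:ℂ) δ := by
    rw [mem_ball_zero_iff, Complex.norm_eq_abs, map_mul, hζabs, hωabs, mul_one]; linarith
  obtain ⟨z1, hz1W, hz1φ⟩ := hδsub hζmem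
  obtain ⟨z2, hz2W, hz2φ⟩ := hδsub hζωmem
  have hfz1 : f z1 = ζ ^ n := by rw [hz1W.1, hz1φ]
  have hfz2 : f z2 = ζ ^ n := by rw [hz2W.1, hz2φ, mul_pow, hωpow, mul_one]
  have hz12 : z1 = z2 := by
    apply hi hz1W.2 hz2W.2
    have heq2 : h z1 - h z0 = h z2 - h z0 := by
      rw [show h z1 - h z0 = f z1 from rfl, show h z2 - h z0 = f z2 from rfl, hfz1, hfz2]
    exact sub_left_inj.mp heq2
  rw [hz12, hz2φ] at hz1φ
  exact hζω hz1φ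


lemma inv_holo {a b : ℝ} {h : ℂ → ℂ} (hd : DifferentiableOn ℂ h (ball 0 1))
    (hi : InjOn h (ball 0 1)) (him : h '' ball 0 1 = sector a b) :
    ∃ g : ℂ → ℂ, MapsTo g (sector a b) (ball (0:ℂ) 1) ∧ (∀ w ∈ sector a b, h (g w) = w) ∧
      ∀ w ∈ sector a b, DifferentiableAt ℂ g w := by
  classical
  set g : ℂ → ℂ := Function.invFunOn h (ball 0 1) with hg
  have hex : ∀ w ∈ sector a b, ∃ z ∈ ball (0:ℂ) 1, h z = w := by
    intro w hw
    rw [← him] at hw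
    obtain ⟨z, hz, hzw⟩ := hw
    exact ⟨z, hz, hzw⟩
  have hmapsto : MapsTo g (sector a b) (ball (0:ℂ) 1) := by
    intro w hw
    exact Function.invFunOn_mem (hex w hw)
  have hright : ∀ w ∈ sector a b, h (g w) = w := by
    intro w hw
    exact Function.invFunOn_eq (hex w hw)
  have hleft : ∀ z ∈ ball (0:ℂ) 1, g (h z) = z := fun z hz =>
    hi.leftInvOn_invFunOn hz
  refine ⟨g, hmapsto, hright, ?_⟩
  intro w hw
  set z1 := g w with hz1
  have hz1mem : z1 ∈ ball (0:ℂ) 1 := hmapsto hw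
  have hhz1 : h z1 = w := hright w hw
  have hA : AnalyticAt ℂ h z1 := hd.analyticAt (isOpen_ball.mem_nhds hz1mem)
  have hne : deriv h z1 ≠ 0 := deriv_ne_zero_of_injOn hd hi hz1mem
  obtain ⟨pser, hpser⟩ := hA
  have hsd := hpser.hasStrictDerivAt
  have hval : (pser 1 fun _ => 1) = deriv h z1 := (hpser.hasDerivAt.deriv).symm
  rw [hval] at hsd
  have hevleft : ∀ᶠ x in 𝓝 z1, g (h x) = x := by
    filter_upwards [isOpen_ball.eventually_mem hz1mem] with x hx using hleft x hx
  have hstrict : HasStrictDerivAt g (deriv h z1)⁻¹ (h z1) :=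
    hsd.to_local_left_inverse hne hevleft
  rw [hhz1] at hstrict
  exact (HasStrictDerivAt.hasDerivAt hstrict).differentiableAt

lemma norm_exp_eq_rpow {p : ℝ} (hp : 0 < p) (lam w : ℂ) :
    ‖Complex.exp ((p:ℂ) * lam * w)‖ = ‖Complex.exp (lam * w)‖ ^ p := by
  rw [Complex.norm_eq_abs, Complex.norm_eq_abs, Complex.abs_exp, Complex.abs_exp]
  have h1 : ((p:ℂ) * lam * w).re = p * (lam * w).re := by
    rw [show (p:ℂ) * lam * w = (p:ℂ) * (lam * w) by ring]
    simp [Complex.mul_re, Complex.ofReal_re, Complex.ofReal_im]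
  rw [h1, Real.rpow_def_of_pos (Real.exp_pos _), Real.log_exp]
  rw [mul_comm]

lemma hardy_to_bound {p : ℝ} (hp : 1 ≤ p) {lam : ℂ} {h : ℂ → ℂ}
    (hd : DifferentiableOn ℂ h (ball 0 1))
    (hMH : MemHardy p (fun z => Complex.exp (lam * h z))) :
    ∃ S : ℝ, ∀ r : ℝ, 0 ≤ r → r < 1 →
      (∫ θ in (0:ℝ)..(2*Real.pi),
        ‖Complex.exp ((p:ℂ) * lam * h ((r:ℂ) * Complex.exp ((θ:ℂ) * Complex.I)))‖) ≤ S := by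
  have hp0 : 0 < p := by linarith
  set Isup := (⨆ r ∈ Ico (0 : ℝ) 1,
    ∫⁻ θ in Ioc (0 : ℝ) (2 * Real.pi),
      (‖Complex.exp (lam * h ((r : ℂ) * Complex.exp ((θ : ℂ) * Complex.I)))‖₊ : ℝ≥0∞) ^ p)
    with hI
  have hI_lt : Isup < ⊤ := hMH
  refine ⟨Isup.toReal, ?_⟩
  intro r hr0 hr1
  have h2pi : (0:ℝ) ≤ 2 * Real.pi := by positivity
  set Gc : ℝ → ℝ := fun θ =>
    ‖Complex.exp ((p:ℂ) * lam * h ((r:ℂ) * Complex.exp ((θ:ℂ) * Complex.I)))‖ with hGc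
  have hcont : Continuous Gc := by
    apply Continuous.norm
    apply Continuous.cexp
    apply Continuous.mul continuous_const
    apply hd.continuousOn.comp_continuous
    · exact (continuous_const.mul (Complex.continuous_exp.comp
        ((Complex.continuous_ofReal).mul continuous_const)))
    · exact fun θ => circle_pt_mem_ball hr0 hr1 θ
  rw [intervalIntegral.integral_of_le h2pi]
  rw [MeasureTheory.integral_eq_lintegral_of_nonneg_ae
    (Filter.Eventually.of_forall (fun θ => norm_nonneg _))
    hcont.aestronglyMeasurable.restrict]
  have hptwise : ∀ θ : ℝ, ENNReal.ofReal (Gc θ)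
      = (‖Complex.exp (lam * h ((r : ℂ) * Complex.exp ((θ : ℂ) * Complex.I)))‖₊ : ℝ≥0∞) ^ p := by
    intro θ
    have hb1 : Gc θ = ‖Complex.exp ((p:ℂ) * lam
        * h ((r:ℂ) * Complex.exp ((θ:ℂ) * Complex.I)))‖ := rfl
    rw [hb1, norm_exp_eq_rpow hp0]
    rw [← ENNReal.ofReal_rpow_of_nonneg (norm_nonneg _) hp0.le]
    rw [ofReal_norm, enorm_eq_nnnorm]
  have hlint_eq : (∫⁻ θ in Ioc (0:ℝ) (2*Real.pi), ENNReal.ofReal (Gc θ))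
      = ∫⁻ θ in Ioc (0:ℝ) (2*Real.pi),
          (‖Complex.exp (lam * h ((r : ℂ) * Complex.exp ((θ : ℂ) * Complex.I)))‖₊ : ℝ≥0∞) ^ p := by
    apply lintegral_congr
    exact hptwise
  rw [hlint_eq]
  apply ENNReal.toReal_mono hI_lt.ne
  rw [hI]
  exact le_iSup₂ (f := fun (r : ℝ) (_ : r ∈ Ico (0:ℝ) 1) =>
      ∫⁻ θ in Ioc (0:ℝ) (2*Real.pi),
        (‖Complex.exp (lam * h ((r : ℂ) * Complex.exp ((θ : ℂ) * Complex.I)))‖₊ : ℝ≥0∞) ^ p)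
    r ⟨hr0, hr1⟩

lemma exp_growth_contradiction {c0 C s : ℝ} (hc0 : 0 < c0) (hs0 : 0 < s)
    (hall : ∀ R : ℝ, 1 ≤ R → Real.exp (c0 * R ^ s) ≤ C * R) : False := by
  set n : ℕ := ⌈2 / s⌉₊ + 1 with hn
  have hn1 : 1 ≤ n := by omega
  have hnpos : (0:ℝ) < n := by exact_mod_cast hn1
  have hsn : 2 ≤ s * n := by
    have h1 : 2 / s ≤ (n:ℝ) := by
      rw [hn]
      push_cast
      linarith [Nat.le_ceil (2/s)]
    calc (2:ℝ) = s * (2 / s) := by field_simp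
      _ ≤ s * n := by apply mul_le_mul_of_nonneg_left h1 hs0.le
  set K : ℝ := (c0 / n) ^ n with hK
  have hKpos : 0 < K := by positivity
  have hlow : ∀ R : ℝ, 1 ≤ R → K * R ^ 2 ≤ Real.exp (c0 * R ^ s) := by
    intro R hR
    have hR0 : (0:ℝ) < R := by linarith
    have hRs : (0:ℝ) ≤ R ^ s := Real.rpow_nonneg hR0.le s
    have hx0 : (0:ℝ) ≤ c0 * R ^ s := by positivity
    -- exp x ≥ (x/n)^n
    have hexp : (c0 * R ^ s / n) ^ n ≤ Real.exp (c0 * R ^ s) := by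
      have h1 : c0 * R ^ s / n ≤ Real.exp (c0 * R ^ s / n) := by
        linarith [Real.add_one_le_exp (c0 * R ^ s / n)]
      have h2 : (c0 * R ^ s / n) ^ n ≤ (Real.exp (c0 * R ^ s / n)) ^ n := by
        apply pow_le_pow_left₀ (by positivity) h1
      have h3 : (Real.exp (c0 * R ^ s / n)) ^ n = Real.exp (c0 * R ^ s) := by
        rw [← Real.exp_nat_mul]
        congr 1
        field_simp
      rw [h3] at h2
      exact h2
    have hsplit : (c0 * R ^ s / n) ^ n = K * (R ^ s) ^ n := by
      rw [hK]
      rw [div_pow, mul_pow]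
      ring
    have hpow2 : R ^ 2 ≤ (R ^ s) ^ n := by
      have h1 : (R ^ s) ^ n = R ^ (s * n) := by
        rw [← Real.rpow_natCast (R ^ s) n, ← Real.rpow_mul hR0.le]
      have h2 : R ^ (2:ℝ) ≤ R ^ (s * n) := Real.rpow_le_rpow_of_exponent_le hR hsn
      have h3 : R ^ (2:ℝ) = R ^ (2:ℕ) := by
        rw [← Real.rpow_natCast R 2]; norm_num
      rw [h1, ← h3]
      exact h2
    calc K * R ^ 2 ≤ K * (R ^ s) ^ n := by
          apply mul_le_mul_of_nonneg_left hpow2 hKpos.le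
      _ = (c0 * R ^ s / n) ^ n := hsplit.symm
      _ ≤ Real.exp (c0 * R ^ s) := hexp
  -- choose R large
  set R : ℝ := max 1 (C / K + 1) with hR
  have hR1 : 1 ≤ R := le_max_left _ _
  have hRC : C / K + 1 ≤ R := le_max_right _ _
  have h1 := hlow R hR1
  have h2 := hall R hR1
  have hR0 : (0:ℝ) < R := by linarith
  have h3 : K * R ^ 2 ≤ C * R := by linarith
  have h4 : K * R ≤ C := by
    have := (mul_le_mul_iff_left₀ hR0).mpr (le_refl (K * R))
    nlinarith
  have h5 : R ≤ C / K := by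
    rw [le_div_iff₀ hKpos]
    linarith [h4]
  linarith


/-- **Lemma 5.6(a).** If `h` is a Koenigs map onto the sector `S(a,b)` with
`-π ≤ a ≤ 0 ≤ b ≤ π` and `0 < b - a < π`, then for `p ≥ 1` the point spectrum on `H^p` is
`i·closure(S(-a, π-b))`: `e^{λh} ∈ H^p` iff `λ = 0` or `λ = ρe^{iφ}` with `ρ > 0` and
`φ ∈ [π/2 - a, 3π/2 - b]`. -/
theorem hardy_spectrum_sector
    (a b : ℝ) (ha : -Real.pi ≤ a) (ha0 : a ≤ 0) (hb0 : 0 ≤ b) (hb : b ≤ Real.pi)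
    (hab_pos : 0 < b - a) (hab_lt : b - a < Real.pi)
    (h : ℂ → ℂ) (hKoenigs : IsKoenigsMap h (sector a b))
    (p : ℝ) (hp : 1 ≤ p) (lam : ℂ) :
    MemHardy p (fun z => Complex.exp (lam * h z)) ↔
      (lam = 0 ∨ ∃ ρ : ℝ, 0 < ρ ∧ ∃ φ : ℝ,
        Real.pi / 2 - a ≤ φ ∧ φ ≤ 3 * Real.pi / 2 - b ∧
        lam = (ρ : ℂ) * Complex.exp ((φ : ℂ) * Complex.I)) := by
  obtain ⟨hd, hi, him⟩ := hKoenigs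
  have hp0 : (0:ℝ) < p := lt_of_lt_of_le one_pos hp
  have pi_pos := Real.pi_pos
  constructor
  · -- hard direction
    intro hMH
    by_contra hcon
    obtain ⟨hlam0', hnot⟩ := not_or.mp hcon
    have hlam0 : lam ≠ 0 := hlam0'
    obtain ⟨θ0, hθa, hθb, hcosθ⟩ := exists_good_angle ha ha0 hb0 hb hab_pos hab_lt hlam0 hnot
    obtain ⟨S, hS⟩ := hardy_to_bound hp hd hMH
    obtain ⟨g, hgmap, hgright, hgdiff⟩ := inv_holo hd hi him
    set w0 : ℂ := Complex.exp (((θ0 : ℝ) : ℂ) * Complex.I) with hw0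
    have habs_lam : 0 < Complex.abs lam := Complex.abs.pos hlam0
    set c0 : ℝ := p * Complex.abs lam * Real.cos (Complex.arg lam + θ0) with hc0
    have hc0pos : 0 < c0 := mul_pos (mul_pos hp0 habs_lam) hcosθ
    have hargw0 : Complex.arg w0 = θ0 := by
      rw [hw0, show Complex.exp (((θ0:ℝ):ℂ) * Complex.I)
          = ((1:ℝ):ℂ) * Complex.exp (((θ0:ℝ):ℂ) * Complex.I) by rw [Complex.ofReal_one, one_mul]]
      exact polar_arg one_pos (by linarith) (by linarith)
    have habsw0 : Complex.abs w0 = 1 := Complex.abs_exp_ofReal_mul_I θ0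
    have hre : ∀ t : ℝ, ((p:ℂ) * lam * (((t:ℝ):ℂ) * w0)).re = t * c0 := by
      intro t
      have h1 : (p:ℂ) * lam * (((t:ℝ):ℂ) * w0)
          = ((p * Complex.abs lam * t : ℝ) : ℂ) *
            Complex.exp (((Complex.arg lam : ℝ) : ℂ) * Complex.I) * w0 := by
        conv_lhs => rw [← Complex.abs_mul_exp_arg_mul_I lam]
        push_cast; ring
      rw [h1, re_polar_mul, habsw0, hargw0, hc0]
      ring
    set F : ℂ → ℂ := fun u => g (Psi a b u) with hF
    have hFdiff : DifferentiableOn ℂ F (ball 0 1) := by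
      intro u hu
      have h1 : DifferentiableWithinAt ℂ (Psi a b) (ball 0 1) u := psi_diff u hu
      have h2 : DifferentiableAt ℂ g (Psi a b u) :=
        hgdiff _ (psi_mem_sector ha hb hab_pos hab_lt hu)
      exact DifferentiableAt.comp_differentiableWithinAt u h2 h1
    have hFmaps : MapsTo F (ball 0 1) (ball 0 1) := fun u hu =>
      hgmap (psi_mem_sector ha hb hab_pos hab_lt hu)
    have hF0 : Complex.abs (F 0) < 1 := mem_ball_zero_iff.mp (hFmaps (mem_ball_self one_pos))
    set c2 : ℝ := 1 - Complex.abs (F 0) with hc2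
    have hc2pos : 0 < c2 := by rw [hc2]; linarith
    set G : ℂ → ℂ := fun z => Complex.exp ((p:ℂ) * lam * h z) with hG
    have hGdiff : DifferentiableOn ℂ G (ball 0 1) := by
      intro z hz
      exact ((hd z hz).const_mul ((p:ℂ) * lam)).cexp
    set s : ℝ := (b - a) / Real.pi with hs
    have hs0 : 0 < s := div_pos hab_pos pi_pos
    set K : ℝ := Real.cos ((θ0 - (a + b) / 2) * (Real.pi / (b - a))) with hKdef
    have hKpos : 0 < K := by
      obtain ⟨u, _, _, hKp, _⟩ := psi_special hab_pos hθa hθb (le_refl (1:ℝ))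
      exact hKp
    have hmain : ∀ R : ℝ, 1 ≤ R →
        Real.exp (c0 * R ^ s) * (c2 * K / (8 * R)) ≤ S / Real.pi := by
      intro R hR
      have hR0 : (0:ℝ) < R := by linarith
      obtain ⟨u, humem, hub, _, hPsiu⟩ := psi_special hab_pos hθa hθb hR
      set z := F u with hz
      have hzmem : z ∈ ball (0:ℂ) 1 := hFmaps humem
      have hhz : h z = ((R ^ s : ℝ) : ℂ) * w0 := by
        rw [hz, hF]
        rw [hgright _ (psi_mem_sector ha hb hab_pos hab_lt humem)]
        rw [hPsiu, hw0, hs]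
      have hnormG : ‖G z‖ = Real.exp (c0 * (R ^ s)) := by
        rw [hG]
        rw [show ‖Complex.exp ((p:ℂ) * lam * h z)‖
            = Real.exp (((p:ℂ) * lam * h z).re) from Complex.abs_exp _]
        rw [hhz, hre (R ^ s), mul_comm]
      have hschwarz := schwarz_pick hFdiff hFmaps humem
      have hcb := cauchy_bound hGdiff hS hzmem
      have h1z : c2 * K / (8 * R) ≤ 1 - Complex.abs z := by
        have e2 : K / (2 * R) ≤ 1 - Complex.abs u := hub
        calc c2 * K / (8 * R) = c2 * (K / (2 * R)) / 4 := by ring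
          _ ≤ c2 * (1 - Complex.abs u) / 4 := by
              apply div_le_div_of_nonneg_right ?_ (by norm_num)
              exact mul_le_mul_of_nonneg_left e2 hc2pos.le
          _ ≤ 1 - Complex.abs z := by rw [hc2]; exact hschwarz
      calc Real.exp (c0 * R ^ s) * (c2 * K / (8 * R))
          ≤ Real.exp (c0 * R ^ s) * (1 - Complex.abs z) := by
            apply mul_le_mul_of_nonneg_left h1z (Real.exp_nonneg _)
        _ = ‖G z‖ * (1 - Complex.abs z) := by rw [hnormG]
        _ ≤ S / Real.pi := hcb
    have hSpos : 0 ≤ S / Real.pi := by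
      have := hmain 1 le_rfl
      nlinarith [Real.exp_pos (c0 * (1:ℝ) ^ s), hc2pos, hKpos,
        mul_pos (mul_pos hc2pos hKpos) (by norm_num : (0:ℝ) < (8:ℝ)⁻¹)]
    set C : ℝ := (S / Real.pi) * 8 / (c2 * K) with hC
    have hall : ∀ R : ℝ, 1 ≤ R → Real.exp (c0 * R ^ s) ≤ C * R := by
      intro R hR
      have hR0 : (0:ℝ) < R := by linarith
      have h1 := hmain R hR
      have hck : 0 < c2 * K := mul_pos hc2pos hKpos
      have heq : Real.exp (c0 * R ^ s)
          = (Real.exp (c0 * R ^ s) * (c2 * K / (8 * R))) * (8 * R / (c2 * K)) := by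
        field_simp
      rw [heq, hC]
      calc (Real.exp (c0 * R ^ s) * (c2 * K / (8 * R))) * (8 * R / (c2 * K))
          ≤ (S / Real.pi) * (8 * R / (c2 * K)) := by
            apply mul_le_mul_of_nonneg_right h1 (by positivity)
        _ = S / Real.pi * 8 / (c2 * K) * R := by ring
    exact exp_growth_contradiction hc0pos hs0 hall
  · -- easy direction
    rintro (rfl | ⟨ρ, hρpos, φ, hφ1, hφ2, rfl⟩)
    · apply memHardy_of_bounded p hp0.le
      intro z _
      simp
    · apply memHardy_of_bounded p hp0.le
      intro z hz
      have hsec : h z ∈ sector a b := him ▸ mem_image_of_mem h hz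
      have hre := re_nonpos_of_mem_sector hρpos.le hφ1 hφ2 hsec
      rw [show ‖Complex.exp ((ρ:ℂ) * Complex.exp ((φ:ℂ) * Complex.I) * h z)‖
          = Real.exp (((ρ:ℂ) * Complex.exp ((φ:ℂ) * Complex.I) * h z).re) from
        Complex.abs_exp _]
      exact Real.exp_le_one_iff.mpr hre
end
end

section
/- Let -π ≤ a ≤ 0 ≤ b ≤ π with 0 < b - a < π, and let h be a Koenigs map onto the angular sector S(a,b). Then for every λ ∈ ℂ with λ ≠ 0 one has D(e^{λh}) < ∞ if and only if λ = ρ e^{iφ} for some ρ > 0 and φ ∈ (π/2 - a, 3π/2 - b) (open interval); that is, the point spectrum on the Dirichlet space equals iS(-a, π-b) ∪ {0}. (Lemma 3.3(c), the Dirichlet-space sector computation.) -/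
open MeasureTheory Set Complex Metric
open scoped ENNReal NNReal Real

noncomputable section

lemma det_cmul (d : ℂ) :
    ContinuousLinearMap.det
      ((ContinuousLinearMap.smulRight (1 : ℂ →L[ℂ] ℂ) d).restrictScalars ℝ)
      = Complex.normSq d := by
  have hm : LinearMap.toMatrix basisOneI basisOneI
      (((ContinuousLinearMap.smulRight (1 : ℂ →L[ℂ] ℂ) d).restrictScalars ℝ) : ℂ →ₗ[ℝ] ℂ)
      = !![d.re, -d.im; d.im, d.re] := by
    ext i j
    fin_cases i <;> fin_cases j <;>
      simp [LinearMap.toMatrix_apply, Complex.coe_basisOneI_repr]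
  rw [ContinuousLinearMap.det, ← LinearMap.det_toMatrix basisOneI, hm, Matrix.det_fin_two_of,
    Complex.normSq_apply]
  ring

lemma abs_cos_sub_cos_le (x y : ℝ) : |Real.cos x - Real.cos y| ≤ |x - y| := by
  rw [Real.cos_sub_cos]
  have h1 := Real.abs_sin_le_one ((x + y) / 2)
  have h2 := Real.abs_sin_le_abs (x := (x - y) / 2)
  calc |(-2) * Real.sin ((x+y)/2) * Real.sin ((x-y)/2)|
      = 2 * |Real.sin ((x+y)/2)| * |Real.sin ((x-y)/2)| := by
        rw [abs_mul, abs_mul]; norm_num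
    _ ≤ 2 * 1 * |(x - y)/2| := by
        apply mul_le_mul _ h2 (abs_nonneg _) (by positivity)
        nlinarith [abs_nonneg (Real.sin ((x+y)/2))]
    _ = |x - y| := by rw [abs_div, abs_of_pos (by norm_num : (0:ℝ) < 2)]; ring

lemma abs_sin_sub_sin_le (x y : ℝ) : |Real.sin x - Real.sin y| ≤ |x - y| := by
  rw [Real.sin_sub_sin]
  have h1 := Real.abs_cos_le_one ((x + y) / 2)
  have h2 := Real.abs_sin_le_abs (x := (x - y) / 2)
  calc |2 * Real.sin ((x-y)/2) * Real.cos ((x+y)/2)|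
      = 2 * |Real.sin ((x-y)/2)| * |Real.cos ((x+y)/2)| := by
        rw [abs_mul, abs_mul]; norm_num
    _ ≤ 2 * |(x - y)/2| * 1 := by
        apply mul_le_mul _ h1 (abs_nonneg _) (by positivity)
        nlinarith [abs_nonneg (Real.sin ((x-y)/2))]
    _ = |x - y| := by rw [abs_div, abs_of_pos (by norm_num : (0:ℝ) < 2)]; ring

lemma cos_neg_cases {u : ℝ} (h1 : -(2*π) < u) (h2 : u ≤ 2*π) (hc : Real.cos u < 0) :
    (π/2 < u ∧ u < 3*π/2) ∨ (-(3*π/2) < u ∧ u < -(π/2)) := by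
  have hπ := Real.pi_pos
  by_contra hcon
  push_neg at hcon
  obtain ⟨h3, h4⟩ := hcon
  have : 0 ≤ Real.cos u := by
    rcases le_or_gt u (-(3*π/2)) with h | h
    · have := Real.cos_nonneg_of_mem_Icc (x := u + 2*π) ⟨by linarith, by linarith⟩
      rwa [Real.cos_add_two_pi] at this
    · have h5 := h4 h
      rcases le_or_gt u (π/2) with h6 | h6
      · exact Real.cos_nonneg_of_mem_Icc ⟨by linarith, h6⟩
      · have h7 := h3 h6
        have := Real.cos_nonneg_of_mem_Icc (x := u - 2*π) ⟨by linarith, by linarith⟩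
        rwa [Real.cos_sub_two_pi] at this
  linarith

lemma re_rho_exp (ρ x : ℝ) : ((ρ:ℂ) * Complex.exp ((x:ℂ) * Complex.I)).re = ρ * Real.cos x := by
  rw [Complex.re_ofReal_mul, Complex.exp_ofReal_mul_I_re]

lemma exp_I_add (x y : ℝ) :
    Complex.exp ((x:ℂ) * Complex.I) * Complex.exp ((y:ℂ) * Complex.I)
      = Complex.exp (((x+y : ℝ):ℂ) * Complex.I) := by
  rw [← Complex.exp_add]; push_cast; ring_nf

lemma c_lip (lam : ℂ) (x y : ℝ) :
    |(lam * Complex.exp ((x:ℂ) * Complex.I)).re - (lam * Complex.exp ((y:ℂ) * Complex.I)).re|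
      ≤ 2 * ‖lam‖ * |x - y| := by
  have h1 : (lam * Complex.exp ((x:ℂ) * Complex.I)).re - (lam * Complex.exp ((y:ℂ) * Complex.I)).re
      = (lam * (Complex.exp ((x:ℂ) * Complex.I) - Complex.exp ((y:ℂ) * Complex.I))).re := by
    rw [mul_sub, Complex.sub_re]
  rw [h1]
  refine le_trans (Complex.abs_re_le_norm _) ?_
  rw [norm_mul]
  have h2 : ‖Complex.exp ((x:ℂ) * Complex.I) - Complex.exp ((y:ℂ) * Complex.I)‖
      ≤ 2 * |x - y| := by
    refine le_trans (Complex.norm_le_abs_re_add_abs_im _) ?_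
    rw [Complex.sub_re, Complex.sub_im, Complex.exp_ofReal_mul_I_re, Complex.exp_ofReal_mul_I_re,
      Complex.exp_ofReal_mul_I_im, Complex.exp_ofReal_mul_I_im]
    have := abs_cos_sub_cos_le x y
    have := abs_sin_sub_sin_le x y
    linarith
  calc ‖lam‖ * ‖Complex.exp ((x:ℂ) * Complex.I) - Complex.exp ((y:ℂ) * Complex.I)‖
      ≤ ‖lam‖ * (2 * |x - y|) :=
        mul_le_mul_of_nonneg_left h2 (norm_nonneg _)
    _ = 2 * ‖lam‖ * |x - y| := by ring

lemma c_cont (lam : ℂ) : Continuous fun θ : ℝ => (lam * Complex.exp ((θ:ℂ) * Complex.I)).re :=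
  Complex.continuous_re.comp (continuous_const.mul
    (Complex.continuous_exp.comp (Complex.continuous_ofReal.mul continuous_const)))

lemma sector_eq (a b : ℝ) (ha : -π ≤ a) (hb : b ≤ π) :
    sector a b = (fun p : ℝ × ℝ => Complex.polarCoord.symm p) '' (Ioi 0 ×ˢ Ioo a b) := by
  ext w
  constructor
  · rintro ⟨hw0, hwa, hwb⟩
    refine ⟨(‖w‖, Complex.arg w), ⟨norm_pos_iff.mpr hw0, hwa, hwb⟩, ?_⟩
    simp only [Complex.polarCoord_symm_apply]
    push_cast
    exact Complex.norm_mul_cos_add_sin_mul_I w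
  · rintro ⟨⟨r, θ⟩, ⟨hr, hθ1, hθ2⟩, rfl⟩
    simp only [Complex.polarCoord_symm_apply]
    have hr' : (0:ℝ) < r := hr
    have harg : Complex.arg ((r:ℂ) * (Real.cos θ + Real.sin θ * Complex.I)) = θ := by
      have := Complex.arg_mul_cos_add_sin_mul_I hr' (θ := θ) ⟨by linarith, by linarith⟩
      convert this using 2
      push_cast
      ring
    have habs : ‖(r:ℂ) * (Real.cos θ + Real.sin θ * Complex.I)‖ = r := by
      rw [norm_mul, Complex.norm_real, Real.norm_eq_abs, abs_of_pos hr']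
      have : ‖Complex.cos (θ:ℂ) + Complex.sin (θ:ℂ) * Complex.I‖ = 1 :=
        Complex.norm_cos_add_sin_mul_I θ
      rw [Complex.ofReal_cos, Complex.ofReal_sin, this, mul_one]
    refine ⟨?_, ?_, ?_⟩
    · intro h0
      rw [h0] at habs
      simp at habs
      linarith
    · rw [harg]; exact hθ1
    · rw [harg]; exact hθ2

lemma core (lam : ℂ) (hlam : lam ≠ 0) (a b : ℝ) (hab : a < b) :
    (∫⁻ p in Ioi (0:ℝ) ×ˢ Ioo a b,
        ENNReal.ofReal (p.1 * Real.exp (2 * (p.1 *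
          (lam * Complex.exp ((p.2:ℂ) * Complex.I)).re)))) < ⊤
    ↔ ∀ θ ∈ Icc a b, (lam * Complex.exp ((θ:ℂ) * Complex.I)).re < 0 := by
  set c : ℝ → ℝ := fun θ => (lam * Complex.exp ((θ:ℂ) * Complex.I)).re with hc
  have hmeasS : MeasurableSet (Ioi (0:ℝ) ×ˢ Ioo a b) :=
    measurableSet_Ioi.prod measurableSet_Ioo
  constructor
  · -- finiteness implies negativity, by contradiction
    intro hJ
    by_contra hcon
    push_neg at hcon
    obtain ⟨θ₀, hθ₀, hge⟩ := hcon
    have hge' : 0 ≤ c θ₀ := hge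
    set L := 2 * ‖lam‖ with hL
    have hLpos : 0 < L := by
      have : 0 < ‖lam‖ := norm_pos_iff.mpr hlam
      linarith
    have hlow : ∀ θ : ℝ, -(L * |θ - θ₀|) ≤ c θ := by
      intro θ
      have h := c_lip lam θ θ₀
      have h2 := neg_le_of_abs_le h
      simp only [← hL] at h2 ⊢
      linarith
    obtain ⟨N, hN⟩ := exists_nat_gt (2 / (b - a))
    have hNpos : 0 < (N:ℝ) := lt_trans (div_pos two_pos (by linarith)) hN
    have key : ∀ n : ℕ, N ≤ n →
        ENNReal.ofReal ((n:ℝ) * Real.exp (-(4*L))) ≤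
          ∫⁻ p in Ioi (0:ℝ) ×ˢ Ioo a b,
            ENNReal.ofReal (p.1 * Real.exp (2 * (p.1 * c p.2))) := by
      intro n hn
      have hnpos : 0 < (n:ℝ) := lt_of_lt_of_le hNpos (Nat.cast_le.mpr hn)
      have h1n : 0 < 1/(n:ℝ) := by positivity
      have hinv : 1/(n:ℝ) ≤ (b-a)/2 := by
        rw [div_le_div_iff₀ hnpos (by norm_num)]
        have h2 : 2 / (b - a) < (n:ℝ) := lt_of_lt_of_le hN (Nat.cast_le.mpr hn)
        rw [div_lt_iff₀ (by linarith)] at h2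
        linarith
      obtain ⟨α, hsub, hdist⟩ : ∃ α : ℝ, Ioo α (α + 1/(n:ℝ)) ⊆ Ioo a b ∧
          ∀ θ ∈ Ioo α (α + 1/(n:ℝ)), |θ - θ₀| ≤ 1/(n:ℝ) := by
        rcases le_or_gt θ₀ ((a+b)/2) with hm | hm
        · refine ⟨θ₀, fun θ hθ => ⟨lt_of_le_of_lt hθ₀.1 hθ.1, by linarith [hθ.2]⟩,
            fun θ hθ => ?_⟩
          have h1 := hθ.1; have h2 := hθ.2
          rw [abs_le]; exact ⟨by linarith, by linarith⟩
        · refine ⟨θ₀ - 1/(n:ℝ), fun θ hθ => ⟨by linarith [hθ.1], ?_⟩, fun θ hθ => ?_⟩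
          · have := hθ.2; have := hθ₀.2; linarith
          · have h1 := hθ.1; have h2 := hθ.2
            rw [abs_le]; exact ⟨by linarith, by linarith⟩
      set R : Set (ℝ × ℝ) := Ioo (n:ℝ) (2*n) ×ˢ Ioo α (α + 1/(n:ℝ)) with hR
      have hRsub : R ⊆ Ioi (0:ℝ) ×ˢ Ioo a b := by
        rintro ⟨r, θ⟩ ⟨hr, hθ⟩
        exact ⟨lt_trans hnpos hr.1, hsub hθ⟩
      have hRmeas : MeasurableSet R := measurableSet_Ioo.prod measurableSet_Ioo
      have hpoint : ∀ p ∈ R, ENNReal.ofReal ((n:ℝ) * Real.exp (-(4*L)))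
          ≤ ENNReal.ofReal (p.1 * Real.exp (2 * (p.1 * c p.2))) := by
        rintro ⟨r, θ⟩ ⟨hr, hθ⟩
        dsimp only
        apply ENNReal.ofReal_le_ofReal
        have hrn : (n:ℝ) ≤ r := hr.1.le
        have hr2n : r ≤ 2*(n:ℝ) := hr.2.le
        have hcθ : -(L * (1/(n:ℝ))) ≤ c θ := by
          refine le_trans ?_ (hlow θ)
          have h1 := hdist θ hθ
          have h2 := mul_le_mul_of_nonneg_left h1 hLpos.le
          linarith
        have hrc : -(2*L) ≤ r * c θ := by
          rcases le_or_gt 0 (c θ) with h | h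
          · have : 0 ≤ r * c θ := mul_nonneg (by linarith) h
            linarith
          · have h1 : 2*(n:ℝ) * c θ ≤ r * c θ := mul_le_mul_of_nonpos_right hr2n h.le
            have h2 : 2*(n:ℝ) * (-(L * (1/(n:ℝ)))) ≤ 2*(n:ℝ) * c θ :=
              mul_le_mul_of_nonneg_left hcθ (by positivity)
            have h3 : 2*(n:ℝ) * (-(L * (1/(n:ℝ)))) = -(2*L) := by
              field_simp
            linarith
        have hexp : Real.exp (-(4*L)) ≤ Real.exp (2 * (r * c θ)) := by
          apply Real.exp_le_exp.mpr
          linarith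
        exact mul_le_mul hrn hexp (Real.exp_pos _).le (by linarith)
      have step1 : ENNReal.ofReal ((n:ℝ) * Real.exp (-(4*L))) * volume R
          ≤ ∫⁻ p in R, ENNReal.ofReal (p.1 * Real.exp (2 * (p.1 * c p.2))) := by
        rw [← setLIntegral_const]
        exact setLIntegral_mono' hRmeas hpoint
      have hvolR : volume R = 1 := by
        rw [hR, Measure.volume_eq_prod, Measure.prod_prod, Real.volume_Ioo, Real.volume_Ioo]
        rw [← ENNReal.ofReal_mul (by linarith)]
        have : (2*(n:ℝ) - n) * (α + 1/(n:ℝ) - α) = 1 := by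
          field_simp
          ring
        rw [this, ENNReal.ofReal_one]
      have step2 : (∫⁻ p in R, ENNReal.ofReal (p.1 * Real.exp (2 * (p.1 * c p.2))))
          ≤ ∫⁻ p in Ioi (0:ℝ) ×ˢ Ioo a b,
              ENNReal.ofReal (p.1 * Real.exp (2 * (p.1 * c p.2))) :=
        lintegral_mono' (Measure.restrict_mono hRsub le_rfl) le_rfl
      calc ENNReal.ofReal ((n:ℝ) * Real.exp (-(4*L)))
          = ENNReal.ofReal ((n:ℝ) * Real.exp (-(4*L))) * volume R := by rw [hvolR, mul_one]
        _ ≤ _ := le_trans step1 step2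
    -- derive a contradiction
    set J := ∫⁻ p in Ioi (0:ℝ) ×ˢ Ioo a b,
        ENNReal.ofReal (p.1 * Real.exp (2 * (p.1 * c p.2))) with hJdef
    obtain ⟨n, hn⟩ := exists_nat_gt (max (N:ℝ) (J.toReal / Real.exp (-(4*L))))
    have hnN : N ≤ n := by
      have : (N:ℝ) < n := lt_of_le_of_lt (le_max_left _ _) hn
      exact_mod_cast this.le
    have hbnd := key n hnN
    have hle : (n:ℝ) * Real.exp (-(4*L)) ≤ J.toReal :=
      (ENNReal.ofReal_le_iff_le_toReal hJ.ne).mp hbnd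
    have : (n:ℝ) ≤ J.toReal / Real.exp (-(4*L)) :=
      (le_div_iff₀ (Real.exp_pos _)).mpr hle
    have := lt_of_le_of_lt (le_max_right (N:ℝ) _) hn
    linarith
  · -- negativity implies finiteness
    intro hneg
    obtain ⟨θm, hθmem, hmax⟩ := isCompact_Icc.exists_isMaxOn (nonempty_Icc.mpr hab.le)
      ((c_cont lam).continuousOn)
    set δ := -(c θm) with hδdef
    have hδ : 0 < δ := by
      have := hneg θm hθmem
      simp only [hδdef]
      linarith
    have hcle : ∀ θ ∈ Icc a b, c θ ≤ -δ := by
      intro θ hθ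
      have h := hmax hθ
      simp only [hδdef, neg_neg]
      exact h
    have hbound : ∀ p ∈ Ioi (0:ℝ) ×ˢ Ioo a b,
        ENNReal.ofReal (p.1 * Real.exp (2 * (p.1 * c p.2)))
          ≤ ENNReal.ofReal (δ⁻¹ * Real.exp (-(δ * p.1))) := by
      rintro ⟨r, θ⟩ ⟨hr, hθ⟩
      dsimp only
      apply ENNReal.ofReal_le_ofReal
      have hr0 : (0:ℝ) < r := hr
      have hcθ : c θ ≤ -δ := hcle θ ⟨hθ.1.le, hθ.2.le⟩
      have h1 : 2 * (r * c θ) ≤ -(δ*r) + -(δ*r) := by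
        have := mul_le_mul_of_nonneg_left hcθ hr0.le
        nlinarith
      have h2 : Real.exp (2 * (r * c θ)) ≤ Real.exp (-(δ*r)) * Real.exp (-(δ*r)) := by
        rw [← Real.exp_add]
        exact Real.exp_le_exp.mpr h1
      have h3 : r * Real.exp (-(δ*r)) ≤ δ⁻¹ := by
        have hA : δ * r ≤ Real.exp (δ * r) := by
          have := Real.add_one_le_exp (δ * r)
          linarith
        have hep : (0:ℝ) < Real.exp (δ*r) := Real.exp_pos _
        rw [Real.exp_neg, ← div_eq_mul_inv, div_le_iff₀ hep]
        calc r = δ⁻¹ * (δ * r) := by field_simp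
          _ ≤ δ⁻¹ * Real.exp (δ*r) := mul_le_mul_of_nonneg_left hA (by positivity)
          _ = δ⁻¹ * Real.exp (δ*r) := rfl
      calc r * Real.exp (2 * (r * c θ))
          ≤ r * (Real.exp (-(δ*r)) * Real.exp (-(δ*r))) :=
            mul_le_mul_of_nonneg_left h2 hr0.le
        _ = (r * Real.exp (-(δ*r))) * Real.exp (-(δ*r)) := by ring
        _ ≤ δ⁻¹ * Real.exp (-(δ*r)) :=
            mul_le_mul_of_nonneg_right h3 (Real.exp_pos _).le
    have hmono := setLIntegral_mono' (μ := (volume : Measure (ℝ×ℝ))) hmeasS hbound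
    refine lt_of_le_of_lt hmono ?_
    have hrestrict : (volume : Measure (ℝ×ℝ)).restrict (Ioi (0:ℝ) ×ˢ Ioo a b)
        = ((volume : Measure ℝ).restrict (Ioi 0)).prod ((volume : Measure ℝ).restrict (Ioo a b)) := by
      rw [Measure.volume_eq_prod, Measure.prod_restrict]
    rw [hrestrict]
    have hf : Measurable fun r : ℝ => ENNReal.ofReal (δ⁻¹ * Real.exp (-(δ * r))) := by
      apply ENNReal.measurable_ofReal.comp
      exact (continuous_const.mul (Real.continuous_exp.comp
        (continuous_const.mul continuous_id).neg)).measurable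
    have heq : (∫⁻ p : ℝ × ℝ, ENNReal.ofReal (δ⁻¹ * Real.exp (-(δ * p.1)))
        ∂(((volume : Measure ℝ).restrict (Ioi 0)).prod ((volume : Measure ℝ).restrict (Ioo a b))))
        = (∫⁻ r in Ioi (0:ℝ), ENNReal.ofReal (δ⁻¹ * Real.exp (-(δ * r))))
          * ∫⁻ _ in Ioo a b, (1:ℝ≥0∞) := by
      rw [← lintegral_prod_mul hf.aemeasurable aemeasurable_const]
      simp only [mul_one]
    rw [heq]
    apply ENNReal.mul_lt_top
    · have hint : IntegrableOn (fun r : ℝ => δ⁻¹ * Real.exp (-δ * r)) (Ioi 0) := by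
        exact (exp_neg_integrableOn_Ioi 0 hδ).const_mul δ⁻¹
      have h2 := hint.lintegral_lt_top
      simp only [neg_mul] at h2 ⊢
      exact h2
    · simp only [lintegral_const, Measure.restrict_apply, MeasurableSet.univ, univ_inter,
        one_mul, Real.volume_Ioo]
      exact ENNReal.ofReal_lt_top

lemma cond_iff (a b : ℝ) (ha : -π ≤ a) (ha0 : a ≤ 0) (hb0 : 0 ≤ b) (hb : b ≤ π)
    (hab_lt : b - a < π) (lam : ℂ) (hlam : lam ≠ 0) :
    (∀ θ ∈ Icc a b, (lam * Complex.exp ((θ:ℂ) * Complex.I)).re < 0) ↔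
      (∃ ρ : ℝ, 0 < ρ ∧ ∃ φ : ℝ, π / 2 - a < φ ∧ φ < 3 * π / 2 - b ∧
        lam = (ρ : ℂ) * Complex.exp ((φ : ℂ) * Complex.I)) := by
  have hπ := Real.pi_pos
  constructor
  · intro hC
    set φ₀ := Complex.arg lam with hφ₀
    set R := ‖lam‖ with hRdef
    have hR : 0 < R := norm_pos_iff.mpr hlam
    have hlam_eq : lam = (R:ℂ) * Complex.exp ((φ₀:ℂ) * Complex.I) :=
      (Complex.norm_mul_exp_arg_mul_I lam).symm
    have harg1 : -π < φ₀ := Complex.neg_pi_lt_arg lam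
    have harg2 : φ₀ ≤ π := Complex.arg_le_pi lam
    have key : ∀ θ ∈ Icc a b, Real.cos (φ₀ + θ) < 0 := by
      intro θ hθ
      have h := hC θ hθ
      rw [hlam_eq, mul_assoc, exp_I_add, re_rho_exp] at h
      by_contra hcon
      push_neg at hcon
      have := mul_nonneg hR.le hcon
      linarith
    have hu := key a ⟨le_refl a, by linarith⟩
    have hv := key b ⟨by linarith, le_refl b⟩
    have hucase := cos_neg_cases (by linarith) (by linarith) hu
    have hvcase := cos_neg_cases (by linarith) (by linarith) hv
    rcases hucase with ⟨hu1, hu2⟩ | ⟨hu1, hu2⟩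
    · rcases hvcase with ⟨hv1, hv2⟩ | ⟨hv1, hv2⟩
      · exact ⟨R, hR, φ₀, by linarith, by linarith, hlam_eq⟩
      · linarith
    · rcases hvcase with ⟨hv1, hv2⟩ | ⟨hv1, hv2⟩
      · linarith
      · refine ⟨R, hR, φ₀ + 2*π, by linarith, by linarith, ?_⟩
        rw [hlam_eq]
        congr 1
        have : Complex.exp (((2*π : ℝ):ℂ) * Complex.I) = 1 := by
          push_cast
          exact Complex.exp_two_pi_mul_I
        rw [← exp_I_add, this, mul_one]
  · rintro ⟨ρ, hρ, φ, h1, h2, rfl⟩ θ hθ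
    rw [mul_assoc, exp_I_add, re_rho_exp]
    have hcos : Real.cos (φ + θ) < 0 := by
      apply Real.cos_neg_of_pi_div_two_lt_of_lt
      · linarith [hθ.1]
      · linarith [hθ.2]
    exact mul_neg_of_pos_of_neg hρ hcos

/-- **Lemma 3.3(c).** If `h` is a Koenigs map onto the sector `S(a,b)` with
`-π ≤ a ≤ 0 ≤ b ≤ π` and `0 < b - a < π`, then the nonzero point spectrum on the Dirichlet
space is the open rotated sector `iS(-a, π-b)`: for `λ ≠ 0`, `D(e^{λh}) < ∞` iff
`λ = ρe^{iφ}` with `ρ > 0` and `φ ∈ (π/2 - a, 3π/2 - b)`. -/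
theorem dirichlet_spectrum_sector
    (a b : ℝ) (ha : -Real.pi ≤ a) (ha0 : a ≤ 0) (hb0 : 0 ≤ b) (hb : b ≤ Real.pi)
    (hab_pos : 0 < b - a) (hab_lt : b - a < Real.pi)
    (h : ℂ → ℂ) (hKoenigs : IsKoenigsMap h (sector a b))
    (lam : ℂ) (hlam : lam ≠ 0) :
    dirichletIntegral (fun z => Complex.exp (lam * h z)) < ⊤ ↔
      (∃ ρ : ℝ, 0 < ρ ∧ ∃ φ : ℝ,
        Real.pi / 2 - a < φ ∧ φ < 3 * Real.pi / 2 - b ∧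
        lam = (ρ : ℂ) * Complex.exp ((φ : ℂ) * Complex.I)) := by
  obtain ⟨hdiff, hinj, himg⟩ := hKoenigs
  have hπ := Real.pi_pos
  have hab : a < b := by linarith
  -- Step 1: change variables from the disk to the sector
  set G : ℂ → ℝ≥0∞ := fun w => (‖lam‖₊ : ℝ≥0∞)^2 * ((‖Complex.exp (lam * w)‖₊ : ℝ≥0∞))^2
    with hG
  set A : ℂ → (ℂ →L[ℝ] ℂ) := fun z =>
    (ContinuousLinearMap.smulRight (1 : ℂ →L[ℂ] ℂ) (deriv h z)).restrictScalars ℝ with hA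
  have hball : MeasurableSet (ball (0:ℂ) 1) := measurableSet_ball
  have hAderiv : ∀ z ∈ ball (0:ℂ) 1, HasFDerivWithinAt h (A z) (ball 0 1) z := by
    intro z hz
    have hd : DifferentiableAt ℂ h z := hdiff.differentiableAt (isOpen_ball.mem_nhds hz)
    exact ((hd.hasDerivAt.hasFDerivAt).restrictScalars ℝ).hasFDerivWithinAt
  have hCoV := lintegral_image_eq_lintegral_abs_det_fderiv_mul volume hball hAderiv hinj G
  have hpt : ∀ z ∈ ball (0:ℂ) 1,
      ((‖deriv (fun z => Complex.exp (lam * h z)) z‖₊ : ℝ≥0∞))^2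
        = ENNReal.ofReal |(A z).det| * G (h z) := by
    intro z hz
    have hd : DifferentiableAt ℂ h z := hdiff.differentiableAt (isOpen_ball.mem_nhds hz)
    have hdd : deriv (fun z => Complex.exp (lam * h z)) z
        = Complex.exp (lam * h z) * (lam * deriv h z) := by
      rw [deriv_cexp (hd.const_mul lam), deriv_const_mul lam hd]
    have hdet : (A z).det = Complex.normSq (deriv h z) := det_cmul _
    have hns : ENNReal.ofReal (Complex.normSq (deriv h z)) = ((‖deriv h z‖₊ : ℝ≥0∞))^2 := by
      rw [Complex.normSq_eq_norm_sq, ENNReal.ofReal_pow (norm_nonneg _),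
        ofReal_norm, enorm_eq_nnnorm]
    rw [hdd, hdet, _root_.abs_of_nonneg (Complex.normSq_nonneg _), hns]
    simp only [hG, nnnorm_mul, ENNReal.coe_mul, mul_pow]
    ring
  have hD : dirichletIntegral (fun z => Complex.exp (lam * h z)) = ∫⁻ w in sector a b, G w := by
    rw [dirichletIntegral, setLIntegral_congr_fun hball hpt, ← hCoV, himg]
  -- Step 2: factor out the constant
  have hfmeas : Measurable fun w : ℂ => ((‖Complex.exp (lam * w)‖₊ : ℝ≥0∞))^2 := by
    apply Measurable.pow_const
    exact (ENNReal.continuous_coe.comp (continuous_nnnorm.comp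
      (Complex.continuous_exp.comp (continuous_const.mul continuous_id)))).measurable
  have hfactor : (∫⁻ w in sector a b, G w)
      = (‖lam‖₊ : ℝ≥0∞)^2 * ∫⁻ w in sector a b, ((‖Complex.exp (lam * w)‖₊ : ℝ≥0∞))^2 := by
    rw [hG]
    exact lintegral_const_mul _ hfmeas
  have hc0 : ((‖lam‖₊ : ℝ≥0∞))^2 ≠ 0 := by
    simp [pow_eq_zero_iff, nnnorm_eq_zero, hlam]
  have hcT : ((‖lam‖₊ : ℝ≥0∞))^2 ≠ ⊤ := by
    exact ENNReal.pow_ne_top ENNReal.coe_ne_top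
  have hiff1 : dirichletIntegral (fun z => Complex.exp (lam * h z)) < ⊤
      ↔ (∫⁻ w in sector a b, ((‖Complex.exp (lam * w)‖₊ : ℝ≥0∞))^2) < ⊤ := by
    rw [hD, hfactor]
    constructor
    · intro hfin
      by_contra hcon
      rw [not_lt, top_le_iff] at hcon
      rw [hcon, ENNReal.mul_top hc0] at hfin
      exact absurd hfin (lt_irrefl _)
    · intro hfin
      exact ENNReal.mul_lt_top hcT.lt_top hfin
  -- Step 3: rewrite the integrand
  have hsector_meas : MeasurableSet (sector a b) := by
    have : sector a b = {(0:ℂ)}ᶜ ∩ (Complex.arg ⁻¹' Ioo a b) := by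
      ext w
      simp [sector, mem_setOf_eq, and_assoc]
    rw [this]
    exact (isClosed_singleton.measurableSet.compl).inter
      (Complex.measurable_arg measurableSet_Ioo)
  have hptw : ∀ w ∈ sector a b, ((‖Complex.exp (lam * w)‖₊ : ℝ≥0∞))^2
      = ENNReal.ofReal (Real.exp (2 * (lam * w).re)) := by
    intro w _
    have h1 : (‖Complex.exp (lam * w)‖₊ : ℝ≥0∞) = ENNReal.ofReal (Real.exp ((lam * w).re)) := by
      rw [← enorm_eq_nnnorm, ← ofReal_norm, Complex.norm_exp]
    rw [h1, ← ENNReal.ofReal_pow (Real.exp_pos _).le]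
    congr 1
    rw [pow_two, ← Real.exp_add]
    ring_nf
  have hiff2 : (∫⁻ w in sector a b, ((‖Complex.exp (lam * w)‖₊ : ℝ≥0∞))^2)
      = ∫⁻ w in sector a b, ENNReal.ofReal (Real.exp (2 * (lam * w).re)) :=
    setLIntegral_congr_fun hsector_meas hptw
  -- Step 4: pass to polar coordinates
  set s : Set (ℝ × ℝ) := Ioi (0:ℝ) ×ˢ Ioo a b with hs
  have hsmeas : MeasurableSet s := measurableSet_Ioi.prod measurableSet_Ioo
  have hstarget : s ⊆ polarCoord.target := by
    rintro ⟨r, θ⟩ ⟨hr, hθ⟩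
    exact ⟨hr, by constructor <;> simp at hθ ⊢ <;> [linarith [hθ.1]; linarith [hθ.2]]⟩
  set F0 : ℂ → ℝ≥0∞ := fun w => ENNReal.ofReal (Real.exp (2 * (lam * w).re)) with hF0
  have hepres : MeasurePreserving (Complex.measurableEquivRealProd.symm) :=
    Complex.volume_preserving_equiv_real_prod.symm
  have htrans := hepres.setLIntegral_comp_preimage_emb
    Complex.measurableEquivRealProd.symm.measurableEmbedding F0 (sector a b)
  have hcomp : ∀ p : ℝ × ℝ, Complex.measurableEquivRealProd.symm (polarCoord.symm p)
      = Complex.polarCoord.symm p := by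
    intro p
    simp only [polarCoord_symm_apply, Complex.measurableEquivRealProd_symm_apply,
      Complex.polarCoord_symm_apply]
    apply Complex.ext <;>
      simp [Complex.cos_ofReal_re, Complex.sin_ofReal_re]
  have hpreim : Complex.measurableEquivRealProd.symm ⁻¹' (sector a b)
      = polarCoord.symm '' s := by
    rw [sector_eq a b ha hb]
    have himg2 : (fun p : ℝ × ℝ => Complex.polarCoord.symm p) '' s
        = Complex.measurableEquivRealProd.symm '' ((fun p : ℝ × ℝ => polarCoord.symm p) '' s) := by
      rw [← image_comp]
      exact image_congr fun p _ => (hcomp p).symm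
    rw [himg2, preimage_image_eq _ (Complex.measurableEquivRealProd.symm.injective)]
  set B : ℝ × ℝ → ℝ × ℝ →L[ℝ] ℝ × ℝ := fun p =>
    LinearMap.toContinuousLinearMap (Matrix.toLin (Module.Basis.finTwoProd ℝ) (Module.Basis.finTwoProd ℝ)
      !![Real.cos p.2, -p.1 * Real.sin p.2; Real.sin p.2, p.1 * Real.cos p.2]) with hB
  have hBdet : ∀ p : ℝ × ℝ, (B p).det = p.1 := by
    intro p
    conv_rhs => rw [← one_mul p.1, ← Real.cos_sq_add_sin_sq p.2]
    simp only [hB, neg_mul, ContinuousLinearMap.det, LinearMap.coe_toContinuousLinearMap,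
      LinearMap.det_toLin, Matrix.det_fin_two_of, sub_neg_eq_add]
    ring
  have hpolarCoV := lintegral_image_eq_lintegral_abs_det_fderiv_mul volume hsmeas
    (fun p _ => (hasFDerivAt_polarCoord_symm p).hasFDerivWithinAt)
    (polarCoord.symm.injOn.mono hstarget)
    (fun q => F0 (Complex.measurableEquivRealProd.symm q))
  have hfinal : (∫⁻ p in s, ENNReal.ofReal |(B p).det|
        * F0 (Complex.measurableEquivRealProd.symm (polarCoord.symm p)))
      = ∫⁻ p in s, ENNReal.ofReal (p.1 * Real.exp (2 * (p.1 *
          (lam * Complex.exp ((p.2:ℂ) * Complex.I)).re))) := by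
    apply setLIntegral_congr_fun hsmeas
    rintro ⟨r, θ⟩ ⟨hr, hθ⟩
    have hr' : (0:ℝ) < r := hr
    beta_reduce
    rw [hBdet, hcomp, Complex.polarCoord_symm_apply]
    dsimp only
    rw [abs_of_pos hr']
    have hw : lam * ((r:ℂ) * (Real.cos θ + Real.sin θ * Complex.I))
        = (r:ℂ) * (lam * Complex.exp ((θ:ℂ) * Complex.I)) := by
      rw [Complex.ofReal_cos, Complex.ofReal_sin, ← Complex.exp_mul_I]
      ring
    rw [hF0]
    dsimp only
    rw [hw, Complex.re_ofReal_mul, ← ENNReal.ofReal_mul hr'.le]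
  have hiff3 : (∫⁻ w in sector a b, ENNReal.ofReal (Real.exp (2 * (lam * w).re)))
      = ∫⁻ p in s, ENNReal.ofReal (p.1 * Real.exp (2 * (p.1 *
          (lam * Complex.exp ((p.2:ℂ) * Complex.I)).re))) := by
    rw [← htrans, hpreim, hpolarCoV]
    exact hfinal
  rw [hiff1, hiff2, hiff3]
  rw [core lam hlam a b hab]
  exact cond_iff a b ha ha0 hb0 hb hab_lt lam hlam
end
end

section
/- Let -π ≤ a ≤ 0 ≤ b ≤ π with π ≤ b - a ≤ 2π and a < b, and let h be a Koenigs map onto the angular sector S(a,b). Then for every λ ∈ ℂ with λ ≠ 0 one has D(e^{λh}) = ∞; that is, the point spectrum on the Dirichlet space equals {0}. (Lemma 3.3(d).) -/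
open MeasureTheory Set Complex Metric
open scoped ENNReal NNReal

noncomputable section

lemma det_mul_complex (c : ℂ) :
    LinearMap.det ((LinearMap.mul ℂ ℂ c).restrictScalars ℝ) = Complex.normSq c := by
  rw [← LinearMap.det_toMatrix Complex.basisOneI, Matrix.det_fin_two]
  simp [LinearMap.toMatrix_apply, Complex.coe_basisOneI, Complex.coe_basisOneI_repr,
    Complex.normSq_apply]

lemma volT (p q : ℝ) : volume {z : ℝ × ℝ | 0 < z.2 ∧ -1 < p * z.1 - q * z.2} = ∞ := by
  rw [eq_top_iff]
  rcases lt_trichotomy p 0 with hp | hp | hp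
  · calc (⊤ : ℝ≥0∞) = volume (Iio ((1 + |q|)/p) ×ˢ Ioo (0:ℝ) 1) := by
          rw [Measure.volume_eq_prod, Measure.prod_prod, Real.volume_Iio, Real.volume_Ioo,
            ENNReal.top_mul (by simp)]
      _ ≤ _ := by
          apply measure_mono
          rintro ⟨x, y⟩ ⟨hx, hy0, hy1⟩
          have hx' : x < (1 + |q|)/p := hx
          have h1 : 1 + |q| < x * p := (lt_div_iff_of_neg hp).mp hx'
          have h2 : q * y ≤ |q| := by
            calc q * y ≤ |q| * y := by
                  apply mul_le_mul_of_nonneg_right (le_abs_self q) hy0.le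
              _ ≤ |q| * 1 := by
                  exact mul_le_mul_of_nonneg_left hy1.le (abs_nonneg q)
              _ = |q| := mul_one _
          exact ⟨hy0, by dsimp only; nlinarith⟩
  · subst hp
    rcases le_or_gt q 0 with hq | hq
    · calc (⊤ : ℝ≥0∞) = volume ((univ : Set ℝ) ×ˢ Ioo (0:ℝ) 1) := by
            rw [Measure.volume_eq_prod, Measure.prod_prod, Real.volume_Ioo, Real.volume_univ,
              ENNReal.top_mul (by simp)]
        _ ≤ _ := by
            apply measure_mono
            rintro ⟨x, y⟩ ⟨-, hy0, hy1⟩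
            refine ⟨hy0, ?_⟩
            have : q * y ≤ 0 := mul_nonpos_of_nonpos_of_nonneg hq hy0.le
            dsimp only; nlinarith [this]
    · calc (⊤ : ℝ≥0∞) = volume ((univ : Set ℝ) ×ˢ Ioo (0:ℝ) (1/q)) := by
            rw [Measure.volume_eq_prod, Measure.prod_prod, Real.volume_Ioo, Real.volume_univ,
              ENNReal.top_mul (by simp; positivity)]
        _ ≤ _ := by
            apply measure_mono
            rintro ⟨x, y⟩ ⟨-, hy0, hy1⟩
            refine ⟨hy0, ?_⟩
            have : q * y < 1 := by
              rw [lt_div_iff₀ hq] at hy1; linarith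
            dsimp only; nlinarith
  · calc (⊤ : ℝ≥0∞) = volume (Ioi ((1 + |q|)/p) ×ˢ Ioo (0:ℝ) 1) := by
          rw [Measure.volume_eq_prod, Measure.prod_prod, Real.volume_Ioi, Real.volume_Ioo,
            ENNReal.top_mul (by simp)]
      _ ≤ _ := by
          apply measure_mono
          rintro ⟨x, y⟩ ⟨hx, hy0, hy1⟩
          have hx' : (1 + |q|)/p < x := hx
          have h1 : 1 + |q| < p * x := by
            rw [div_lt_iff₀ hp] at hx'; linarith
          have h2 : q * y ≤ |q| := by
            calc q * y ≤ |q| * y :=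
                  mul_le_mul_of_nonneg_right (le_abs_self q) hy0.le
              _ ≤ |q| * 1 := mul_le_mul_of_nonneg_left hy1.le (abs_nonneg q)
              _ = |q| := mul_one _
          exact ⟨hy0, by dsimp only; nlinarith⟩

lemma volS (m : ℂ) : volume {z : ℂ | 0 < z.im ∧ -1 < (m * z).re} = ∞ := by
  have hT : MeasurableSet {z : ℝ × ℝ | 0 < z.2 ∧ -1 < m.re * z.1 - m.im * z.2} := by
    apply MeasurableSet.inter
    · exact measurableSet_lt measurable_const measurable_snd
    · exact measurableSet_lt measurable_const
        ((measurable_fst.const_mul m.re).sub (measurable_snd.const_mul m.im))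
  have hpre : {z : ℂ | 0 < z.im ∧ -1 < (m * z).re}
      = Complex.measurableEquivRealProd ⁻¹' {z : ℝ × ℝ | 0 < z.2 ∧ -1 < m.re * z.1 - m.im * z.2} := by
    ext z
    simp [Complex.measurableEquivRealProd_apply, Complex.mul_re]
  rw [hpre, Complex.volume_preserving_equiv_real_prod.measure_preimage hT.nullMeasurableSet]
  exact volT m.re m.im

lemma volE (a : ℝ) (lam : ℂ) :
    volume {w : ℂ | 0 < (Complex.exp (-(a:ℂ) * Complex.I) * w).im ∧ -1 < (lam * w).re} = ∞ := by
  set u : ℂ := Complex.exp (-(a:ℂ) * Complex.I) with hu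
  have hu0 : u ≠ 0 := Complex.exp_ne_zero _
  set L : ℂ →ₗ[ℝ] ℂ := (LinearMap.mul ℂ ℂ u).restrictScalars ℝ with hL
  have hdet : L.det = Complex.normSq u := det_mul_complex u
  have hdet0 : L.det ≠ 0 := by
    rw [hdet]; exact (Complex.normSq_pos.2 hu0).ne'
  have hpre : {w : ℂ | 0 < (u * w).im ∧ -1 < (lam * w).re}
      = L ⁻¹' {z : ℂ | 0 < z.im ∧ -1 < ((lam * u⁻¹) * z).re} := by
    ext w
    have hmul : lam * u⁻¹ * (u * w) = lam * w := by field_simp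
    simp only [mem_setOf_eq, mem_preimage, hL, LinearMap.coe_restrictScalars,
      LinearMap.mul_apply', hmul]
  rw [hpre, MeasureTheory.Measure.addHaar_preimage_linearMap volume hdet0, volS]
  have hpos : (0:ℝ) < |L.det⁻¹| := abs_pos.2 (inv_ne_zero hdet0)
  rw [ENNReal.mul_top (by simp only [ne_eq, ENNReal.ofReal_eq_zero, not_le]; exact hpos)]

lemma mem_sector_of_im_pos {a b : ℝ} (ha : -Real.pi ≤ a) (ha0 : a ≤ 0) (hb0 : 0 ≤ b)
    (hab_ge : Real.pi ≤ b - a) {w : ℂ}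
    (hw : 0 < (Complex.exp (-(a:ℂ) * Complex.I) * w).im) : w ∈ sector a b := by
  set z : ℂ := Complex.exp (-(a:ℂ) * Complex.I) * w with hz
  have hz0 : z ≠ 0 := fun h => by simp [h] at hw
  have hw0 : w ≠ 0 := fun h => hz0 (by simp [hz, h])
  have hwz : w = Complex.exp ((a:ℂ) * Complex.I) * z := by
    rw [hz, ← mul_assoc, ← Complex.exp_add]
    ring_nf
    rw [Complex.exp_zero, one_mul]
  have harg0 : 0 < Complex.arg z := by
    rcases (Complex.arg_nonneg_iff.2 hw.le).lt_or_eq with h | h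
    · exact h
    · exfalso
      have := (Complex.arg_eq_zero_iff.1 h.symm).2
      exact hw.ne' (by rw [hz] at this ⊢; exact this)
  have hargpi : Complex.arg z < Real.pi := by
    rcases (Complex.arg_le_pi z).lt_or_eq with h | h
    · exact h
    · exfalso
      have := (Complex.arg_eq_pi_iff.1 h).2
      exact hw.ne' (by rw [hz] at this ⊢; exact this)
  rcases eq_or_lt_of_le ha with hA | hA
  · -- a = -π
    have hexp : Complex.exp ((a:ℂ) * Complex.I) = -1 := by
      rw [← hA]
      push_cast
      rw [neg_mul, Complex.exp_neg, Complex.exp_pi_mul_I]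
      norm_num
    have hargw : Complex.arg w = Complex.arg z - Real.pi := by
      rw [hwz, hexp, neg_one_mul, Complex.arg_neg_eq_arg_sub_pi_of_im_pos hw]
    refine ⟨hw0, ?_, ?_⟩
    · rw [hargw, ← hA]; linarith
    · rw [hargw]; linarith
  · -- -π < a
    have hexp0 : Complex.exp ((a:ℂ) * Complex.I) ≠ 0 := Complex.exp_ne_zero _
    have hargexp : Complex.arg (Complex.exp ((a:ℂ) * Complex.I)) = a := by
      rw [Complex.exp_mul_I]
      exact Complex.arg_cos_add_sin_mul_I ⟨hA, by linarith [Real.pi_pos]⟩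
    have hmem : Complex.arg (Complex.exp ((a:ℂ) * Complex.I)) + Complex.arg z
        ∈ Set.Ioc (-Real.pi) Real.pi := by
      rw [hargexp]
      constructor <;> [linarith; linarith]
    have hargw : Complex.arg w = a + Complex.arg z := by
      rw [hwz, Complex.arg_mul hexp0 hz0 hmem, hargexp]
    refine ⟨hw0, ?_, ?_⟩
    · rw [hargw]; linarith
    · rw [hargw]; linarith

/-- **Lemma 3.3(d).** If `h` is a Koenigs map onto the sector `S(a,b)` with
`-π ≤ a ≤ 0 ≤ b ≤ π`, `a < b` and `π ≤ b - a ≤ 2π`, then the point spectrum on the Dirichlet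
space is `{0}`: `D(e^{λh}) = ∞` for every nonzero `λ`. -/
theorem dirichlet_spectrum_wide_sector
    (a b : ℝ) (ha : -Real.pi ≤ a) (ha0 : a ≤ 0) (hb0 : 0 ≤ b) (hb : b ≤ Real.pi)
    (hab : a < b) (hab_ge : Real.pi ≤ b - a) (hab_le : b - a ≤ 2 * Real.pi)
    (h : ℂ → ℂ) (hKoenigs : IsKoenigsMap h (sector a b))
    (lam : ℂ) (hlam : lam ≠ 0) :
    dirichletIntegral (fun z => Complex.exp (lam * h z)) = ⊤ := by
  obtain ⟨hdiff, hinj, himg⟩ := hKoenigs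
  set G : ℂ → ℝ≥0∞ := fun w =>
    (ENNReal.ofReal (‖lam‖ * Real.exp ((lam * w).re)))^2 with hG
  set A : ℂ → (ℂ →L[ℝ] ℂ) := fun x =>
    (ContinuousLinearMap.smulRight (1 : ℂ →L[ℂ] ℂ) (deriv h x)).restrictScalars ℝ with hA
  have hfd : ∀ x ∈ ball (0:ℂ) 1, HasFDerivWithinAt h (A x) (ball 0 1) x := by
    intro x hx
    have hd : DifferentiableAt ℂ h x := hdiff.differentiableAt (isOpen_ball.mem_nhds hx)
    exact ((hasDerivAt_iff_hasFDerivAt.1 hd.hasDerivAt).restrictScalars ℝ).hasFDerivWithinAt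
  have hdet : ∀ x, (A x).det = Complex.normSq (deriv h x) := by
    intro x
    have hco : ((A x) : ℂ →ₗ[ℝ] ℂ) = (LinearMap.mul ℂ ℂ (deriv h x)).restrictScalars ℝ := by
      ext w
      simp [hA, mul_comm]
    rw [ContinuousLinearMap.det, hco, det_mul_complex]
  have hcov := MeasureTheory.lintegral_image_eq_lintegral_abs_det_fderiv_mul volume
    measurableSet_ball hfd hinj G
  rw [himg] at hcov
  have hint : dirichletIntegral (fun z => Complex.exp (lam * h z))
      = ∫⁻ w in sector a b, G w := by
    rw [hcov, dirichletIntegral]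
    apply setLIntegral_congr_fun measurableSet_ball
    intro x hx; beta_reduce
    have hd : DifferentiableAt ℂ h x := hdiff.differentiableAt (isOpen_ball.mem_nhds hx)
    have hder : HasDerivAt (fun z => Complex.exp (lam * h z))
        (Complex.exp (lam * h x) * (lam * deriv h x)) x :=
      (hd.hasDerivAt.const_mul lam).cexp
    rw [hder.deriv, hdet x, hG]
    dsimp only
    rw [← ENNReal.ofReal_coe_nnreal, coe_nnnorm, ← ENNReal.ofReal_pow (norm_nonneg _),
      ← ENNReal.ofReal_pow (by positivity : (0:ℝ) ≤ ‖lam‖ * Real.exp ((lam * h x).re)),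
      ← ENNReal.ofReal_mul (abs_nonneg _)]
    congr 1
    rw [norm_mul, norm_mul,
      Complex.norm_exp, _root_.abs_of_nonneg (Complex.normSq_nonneg _), Complex.normSq_eq_norm_sq]
    ring
  rw [hint, eq_top_iff]
  set E : Set ℂ := {w : ℂ | 0 < (Complex.exp (-(a:ℂ) * Complex.I) * w).im ∧ -1 < (lam * w).re}
    with hE
  have hEsub : E ⊆ sector a b := fun w hw => mem_sector_of_im_pos ha ha0 hb0 hab_ge hw.1
  set c0 : ℝ≥0∞ := (ENNReal.ofReal (‖lam‖ * Real.exp (-1)))^2 with hc0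
  have hc00 : c0 ≠ 0 := by
    apply pow_ne_zero
    rw [ne_eq, ENNReal.ofReal_eq_zero, not_le]
    have : 0 < ‖lam‖ := norm_pos_iff.2 hlam
    positivity
  have hGmeas : Measurable G := by
    apply Measurable.pow_const
    apply ENNReal.measurable_ofReal.comp
    apply Measurable.const_mul
    exact Real.measurable_exp.comp (Complex.measurable_re.comp (measurable_id.const_mul lam))
  calc (⊤ : ℝ≥0∞) = c0 * volume E := by rw [hE, volE a lam, ENNReal.mul_top hc00]
    _ = ∫⁻ _ in E, c0 := (setLIntegral_const E c0).symm
    _ ≤ ∫⁻ w in E, G w := by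
        apply setLIntegral_mono hGmeas
        intro w hw
        rw [hc0, hG]
        apply pow_le_pow_left₀ zero_le
        apply ENNReal.ofReal_le_ofReal
        exact mul_le_mul_of_nonneg_left (Real.exp_le_exp.2 hw.2.le) (norm_nonneg lam)
    _ ≤ ∫⁻ w in sector a b, G w :=
        lintegral_mono' (Measure.restrict_mono hEsub le_rfl) le_rfl
end
end
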